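/- arXiv:2106.14414 — 16 statements merged into one kernel-verified Lean document; each statement's English description precedes it below -/
import Mathlib

section
/- Let (L, τ) be a locally solid Riesz space, I an admissible ideal on ℕ, (t_n) a weighted sequence of real numbers, x = (x_n) a sequence in L, and V a τ-neighborhood of zero. If V is a convex set, then the rough weighted I_τ-limit set WI_τ-LIM^V x is a convex subset of L. -/
open Topology Filter Set Pointwise

/-- An admissible ideal on ℕ: contains all finite sets, closed under subsets
and finite unions, and does not contain ℕ itself. -/
def IsAdmissibleIdeal (I : Set (Set ℕ)) : Prop :=
  (∀ A : Set ℕ, A.Finite → A ∈ I) ∧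
  (∀ A B : Set ℕ, A ∈ I → B ⊆ A → B ∈ I) ∧
  (∀ A B : Set ℕ, A ∈ I → B ∈ I → A ∪ B ∈ I) ∧
  (Set.univ : Set ℕ) ∉ I

/-- A set `S` in a lattice-ordered group is solid if `|a| ≤ |b|` and `b ∈ S` imply `a ∈ S`,
where `|a| = a ⊔ -a`. -/
def IsSolidSet {L : Type*} [Lattice L] [AddCommGroup L] (S : Set L) : Prop :=
  ∀ a b : L, a ⊔ -a ≤ b ⊔ -b → b ∈ S → a ∈ S

/-- The rough weighted `I`-τ-limit set of the sequence `x`, with weights `t` and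
degree of roughness the neighborhood `V` of zero. -/
def WLimSet {L : Type*} [AddCommGroup L] [Module ℝ L] [TopologicalSpace L]
    (I : Set (Set ℕ)) (t : ℕ → ℝ) (x : ℕ → L) (V : Set L) : Set L :=
  {x' | ∀ U ∈ 𝓝 (0 : L), {n : ℕ | t n • (x n - x') ∉ V + U} ∈ I}

/-- The set of weighted `I`-τ-cluster points of the sequence `x` with weights `t`. -/
def WClusterSet {L : Type*} [AddCommGroup L] [Module ℝ L] [TopologicalSpace L]
    (I : Set (Set ℕ)) (t : ℕ → ℝ) (x : ℕ → L) : Set L :=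
  {c | ∀ U ∈ 𝓝 (0 : L), {n : ℕ | t n • (x n - c) ∈ U} ∉ I}

/-- In a locally solid Riesz space, if the degree of roughness `V`
(a neighborhood of zero) is convex, then the rough weighted `I`-τ-limit set is convex. -/
theorem convex_WLimSet_of_convex
    {L : Type*} [AddCommGroup L] [Lattice L] [Module ℝ L]
    [CovariantClass L L (· + ·) (· ≤ ·)] [PosSMulMono ℝ L]
    [TopologicalSpace L] [IsTopologicalAddGroup L] [ContinuousSMul ℝ L]
    (hsolid : ∀ U ∈ 𝓝 (0 : L), ∃ W ∈ 𝓝 (0 : L), W ⊆ U ∧ IsSolidSet W)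
    {I : Set (Set ℕ)} (hI : IsAdmissibleIdeal I)
    {t : ℕ → ℝ} (ht : ∃ δ : ℝ, 0 < δ ∧ ∀ n, δ < t n)
    (x : ℕ → L) {V : Set L} (hV : V ∈ 𝓝 (0 : L)) (hVconv : Convex ℝ V) :
    Convex ℝ (WLimSet I t x V) := by
  intro y hy z hz a b ha hb hab
  intro U hU
  -- shrink U: find U' with U' + U' ⊆ U, then a solid W ⊆ U'
  obtain ⟨U', hU', hU'U⟩ := exists_nhds_zero_half hU
  obtain ⟨W, hW, hWU', hWsolid⟩ := hsolid U' hU'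
  have hAy := hy W hW
  have hAz := hz W hW
  have habs_nonneg : ∀ w : L, (0 : L) ≤ w ⊔ -w := by
    intro w
    have h1 : w ≤ w ⊔ -w := le_sup_left
    have h2 : -w ≤ w ⊔ -w := le_sup_right
    have h3 : (0:L) ≤ (w ⊔ -w) + (w ⊔ -w) := by
      have := add_le_add h2 h1
      simpa using this
    have h4 : (0:L) ≤ (2:ℝ) • (w ⊔ -w) := by
      rw [two_smul]; exact h3
    have := smul_le_smul_of_nonneg_left h4 (by norm_num : (0:ℝ) ≤ (2:ℝ)⁻¹)
    simpa using this
  have hsmulW : ∀ c : ℝ, 0 ≤ c → c ≤ 1 → ∀ w ∈ W, c • w ∈ W := by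
    intro c hc0 hc1 w hw
    apply hWsolid (c • w) w _ hw
    have h1 : c • w ⊔ -(c • w) ≤ c • (w ⊔ -w) := by
      apply sup_le
      · exact smul_le_smul_of_nonneg_left le_sup_left hc0
      · rw [← smul_neg]
        exact smul_le_smul_of_nonneg_left le_sup_right hc0
    refine h1.trans ?_
    have h2 : (0:L) ≤ (1 - c) • (w ⊔ -w) :=
      smul_nonneg (by linarith) (habs_nonneg w)
    have h3 : c • (w ⊔ -w) + (1 - c) • (w ⊔ -w) = w ⊔ -w := by
      rw [← add_smul]; ring_nf; rw [one_smul]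
    calc c • (w ⊔ -w) ≤ c • (w ⊔ -w) + (1 - c) • (w ⊔ -w) := le_add_of_nonneg_right h2
      _ = w ⊔ -w := h3
  have hsub : {n : ℕ | t n • (x n - (a • y + b • z)) ∉ V + U} ⊆
      {n : ℕ | t n • (x n - y) ∉ V + W} ∪ {n : ℕ | t n • (x n - z) ∉ V + W} := by
    intro n hn
    by_contra hcon
    simp only [Set.mem_union, Set.mem_setOf_eq, not_or, not_not] at hcon
    obtain ⟨hpy, hpz⟩ := hcon
    obtain ⟨v1, hv1, w1, hw1, hvw1⟩ := hpy
    obtain ⟨v2, hv2, w2, hw2, hvw2⟩ := hpz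
    apply hn
    have key : t n • (x n - (a • y + b • z)) =
        a • (t n • (x n - y)) + b • (t n • (x n - z)) := by
      have h1 : (1:ℝ) = a + b := hab.symm
      rw [smul_comm a, smul_comm b, ← smul_add]
      congr 1
      rw [smul_sub, smul_sub, sub_add_sub_comm, ← add_smul, hab, one_smul]
    rw [key, ← hvw1, ← hvw2]
    have : a • (v1 + w1) + b • (v2 + w2) = (a • v1 + b • v2) + (a • w1 + b • w2) := by
      rw [smul_add, smul_add]; abel
    rw [this]
    exact Set.add_mem_add (hVconv hv1 hv2 ha hb hab)
      (hU'U _ (hWU' (hsmulW a ha (by linarith) w1 hw1)) _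
        (hWU' (hsmulW b hb (by linarith) w2 hw2)))
  exact hI.2.1 _ _ (hI.2.2.1 _ _ hAy hAz) hsub
end

section
/- Let (L, τ) be a Hausdorff locally solid Riesz space, I an admissible ideal on ℕ, (t_n) a weighted sequence of real numbers, x = (x_n) a sequence in L, and V a τ-bounded τ-neighborhood of zero. If the weighted sequence (t_n) is not I-bounded, then the rough weighted I_τ-limit set WI_τ-LIM^V x contains at most one element. -/
open Topology Filter Set Pointwise

lemma smul_mem_of_solid {L : Type*} [AddCommGroup L] [Lattice L] [Module ℝ L]
    [CovariantClass L L (· + ·) (· ≤ ·)] [PosSMulMono ℝ L]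
    {S : Set L} (hS : IsSolidSet S) {μ : ℝ} (hμ : |μ| ≤ 1) {w : L} (hw : w ∈ S) :
    μ • w ∈ S := by
  have key : ∀ ν : ℝ, |ν| ≤ 1 → ν • w ≤ w ⊔ -w := by
    intro ν hν
    set c := w ⊔ -w with hc
    have hc0 : (0:L) ≤ c := by
      have h2 : (0:L) ≤ c + c := by
        calc (0:L) = w + -w := by abel
        _ ≤ c + c := add_le_add le_sup_left le_sup_right
      have h3 := smul_le_smul_of_nonneg_left h2 (by norm_num : (0:ℝ) ≤ 1/2)
      calc (0:L) = (1/2 : ℝ) • (0:L) := (smul_zero _).symm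
      _ ≤ (1/2:ℝ) • (c + c) := h3
      _ = c := by rw [smul_add, ← add_smul]; norm_num
    have step : ∀ a : L, a ≤ c → ∀ r : ℝ, 0 ≤ r → r ≤ 1 → r • a ≤ c := by
      intro a ha r hr0 hr1
      have h1 : r • a ≤ r • c := smul_le_smul_of_nonneg_left ha hr0
      have h2' : r • c ≤ c := by
        have hpos : (0:L) ≤ (1 - r) • c := by
          have := smul_le_smul_of_nonneg_left hc0 (by linarith : (0:ℝ) ≤ 1 - r)
          simpa using this
        have hsum : r + (1 - r) = 1 := by ring
        calc r • c = r • c + 0 := (add_zero _).symm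
        _ ≤ r • c + (1 - r) • c := add_le_add_right hpos _
        _ = c := by rw [← add_smul, hsum, one_smul]
      exact h1.trans h2'
    rcases le_or_gt 0 ν with h | h
    · exact step w le_sup_left ν h (by rwa [abs_of_nonneg h] at hν)
    · have e : ν • w = (-ν) • (-w) := by rw [neg_smul_neg]
      rw [e]
      exact step (-w) le_sup_right (-ν) (by linarith) (by rwa [abs_of_neg h] at hν)
  apply hS (μ • w) w _ hw
  refine sup_le (key μ hμ) ?_
  rw [← neg_smul]
  exact key (-μ) (by rwa [abs_neg])


/-- In a Hausdorff locally solid Riesz space, if the weighted sequence `t`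
is not `I`-bounded and the neighborhood `V` of zero is τ-bounded, then the rough weighted
`I`-τ-limit set contains at most one element. -/
theorem WLimSet_subsingleton_of_not_Ibounded
    {L : Type*} [AddCommGroup L] [Lattice L] [Module ℝ L]
    [CovariantClass L L (· + ·) (· ≤ ·)] [PosSMulMono ℝ L]
    [TopologicalSpace L] [IsTopologicalAddGroup L] [ContinuousSMul ℝ L] [T2Space L]
    (hsolid : ∀ U ∈ 𝓝 (0 : L), ∃ W ∈ 𝓝 (0 : L), W ⊆ U ∧ IsSolidSet W)
    {I : Set (Set ℕ)} (hI : IsAdmissibleIdeal I)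
    {t : ℕ → ℝ} (ht : ∃ δ : ℝ, 0 < δ ∧ ∀ n, δ < t n)
    (htI : ¬ ∃ M : ℝ, 0 < M ∧ {n : ℕ | M ≤ t n} ∈ I)
    (x : ℕ → L) {V : Set L} (hV : V ∈ 𝓝 (0 : L))
    (hVbdd : ∀ U ∈ 𝓝 (0 : L), ∃ lam : ℝ, 0 < lam ∧ V ⊆ lam • U) :
(WLimSet I t x V).Subsingleton := by
  intro y hy z hz
  have main : ∀ N ∈ 𝓝 (0:L), y - z ∈ N := by
    intro N hN
    obtain ⟨W, hWnhds, hWN, hWsolid⟩ := hsolid N hN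
    obtain ⟨W1, hW1, hW1add⟩ := exists_nhds_zero_half hWnhds
    obtain ⟨W2, hW2, hW2add⟩ := exists_nhds_zero_half hW1
    obtain ⟨W3, hW3, hW3sub, hW3solid⟩ := hsolid W2 hW2
    obtain ⟨lam, hlam, hVlam⟩ := hVbdd W3 hW3
    push_neg at htI
    have hM := htI (max lam 1) (lt_of_lt_of_le one_pos (le_max_right _ _))
    have hS1 := hy V hV
    have hS2 := hz V hV
    have hunion := hI.2.2.1 _ _ hS1 hS2
    have hnot : ¬ {n : ℕ | max lam 1 ≤ t n} ⊆
        ({n | t n • (x n - y) ∉ V + V} ∪ {n | t n • (x n - z) ∉ V + V}) :=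
      fun hsub => hM (hI.2.1 _ _ hunion hsub)
    obtain ⟨n, hn1, hn2⟩ := Set.not_subset.mp hnot
    simp only [Set.mem_union, Set.mem_setOf_eq, not_or, not_not] at hn2
    obtain ⟨h1, h2⟩ := hn2
    have htn : max lam 1 ≤ t n := hn1
    have htn1 : (1:ℝ) ≤ t n := le_trans (le_max_right _ _) htn
    have htn0 : (0:ℝ) < t n := lt_of_lt_of_le one_pos htn1
    have htlam : lam ≤ t n := le_trans (le_max_left _ _) htn
    rw [Set.mem_add] at h1 h2
    obtain ⟨a, ha, b, hb, hab⟩ := h1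
    obtain ⟨c, hc, d, hd, hcd⟩ := h2
    obtain ⟨w1, hw1, rfl⟩ := hVlam ha
    obtain ⟨w2, hw2, rfl⟩ := hVlam hb
    obtain ⟨w3, hw3, rfl⟩ := hVlam hc
    obtain ⟨w4, hw4, rfl⟩ := hVlam hd
    have hneg : ∀ w ∈ W3, -w ∈ W3 := by
      intro w hw
      have := smul_mem_of_solid hW3solid (μ := -1) (by norm_num) hw
      simpa using this
    have hs12 : (w3 + -w1) ∈ W1 := hW2add _ (hW3sub hw3) _ (hW3sub (hneg _ hw1))
    have hs34 : (w4 + -w2) ∈ W1 := hW2add _ (hW3sub hw4) _ (hW3sub (hneg _ hw2))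
    have hsW : (w3 + -w1) + (w4 + -w2) ∈ W := hW1add _ hs12 _ hs34
    set s : L := (w3 + -w1) + (w4 + -w2) with hs
    have hkey : t n • (y - z) = lam • s := by
      have e1 : t n • (y - z) = t n • (x n - z) - t n • (x n - y) := by
        rw [← smul_sub]; congr 1; abel
      rw [e1, ← hcd, ← hab, hs]
      simp only [smul_add, smul_neg]
      abel
    have hyz : y - z = ((t n)⁻¹ * lam) • s := by
      have e2 : ((t n)⁻¹ : ℝ) • (t n • (y - z)) = ((t n)⁻¹ * lam) • s := by
        rw [hkey, smul_smul]
      rwa [smul_smul, inv_mul_cancel₀ (ne_of_gt htn0), one_smul] at e2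
    have hμ : |(t n)⁻¹ * lam| ≤ 1 := by
      rw [abs_of_pos (mul_pos (inv_pos.mpr htn0) hlam)]
      rw [inv_mul_le_iff₀ htn0]
      linarith
    rw [hyz]
    exact hWN (smul_mem_of_solid hWsolid hμ hsW)
  by_contra hne
  have hnz : (0:L) ≠ y - z := fun h => hne (sub_eq_zero.mp h.symm)
  exact (main _ (compl_singleton_mem_nhds hnz)) rfl
end

section
/- Let (L, τ) be a Hausdorff locally solid Riesz space, I an admissible ideal on ℕ, (t_n) a weighted sequence of real numbers, and x = (x_n) a sequence in L. Let V be a solid τ-neighborhood of zero such that V + V + U is again a solid τ-neighborhood of zero for every solid τ-neighborhood U of zero. Then for all x*, y* ∈ WI_τ-LIM^V x one has (inf_{n∈ℕ} t_n) · (x* − y*) ∈ closure(V + V); equivalently x* − y* lies in (1/inf_{n} t_n) · closure(V + V). -/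
open Topology Filter Set Pointwise

section Aux
variable {L : Type*} [AddCommGroup L] [Lattice L] [Module ℝ L]
  [CovariantClass L L (· + ·) (· ≤ ·)] [PosSMulMono ℝ L]

lemma neg_mem_of_solid {S : Set L} (hS : IsSolidSet S) {a : L} (ha : a ∈ S) : -a ∈ S :=
  hS (-a) a (by rw [neg_neg, sup_comm]) ha

lemma key_abs_le {m c : ℝ} (hm : 0 < m) (hmc : m ≤ c) (z : L) :
    (m • z) ⊔ -(m • z) ≤ (c • z) ⊔ -(c • z) := by
  have hc : 0 < c := hm.trans_le hmc
  have habs : (0:L) ≤ z ⊔ -z := by have := abs_nonneg z; rwa [abs] at this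
  have hiso : c • (z ⊔ -z) ≤ (c • z) ⊔ -(c • z) := by
    have h1 : z ⊔ -z ≤ c⁻¹ • ((c • z) ⊔ -(c • z)) := by
      apply sup_le
      · calc z = c⁻¹ • (c • z) := by rw [smul_smul, inv_mul_cancel₀ hc.ne', one_smul]
          _ ≤ _ := smul_le_smul_of_nonneg_left le_sup_left (inv_nonneg.2 hc.le)
      · calc -z = c⁻¹ • (-(c • z)) := by
              rw [smul_neg, smul_smul, inv_mul_cancel₀ hc.ne', one_smul]
          _ ≤ _ := smul_le_smul_of_nonneg_left le_sup_right (inv_nonneg.2 hc.le)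
    calc c • (z ⊔ -z) ≤ c • (c⁻¹ • ((c • z) ⊔ -(c • z))) :=
          smul_le_smul_of_nonneg_left h1 hc.le
      _ = _ := by rw [smul_smul, mul_inv_cancel₀ hc.ne', one_smul]
  have hmono : m • (z ⊔ -z) ≤ c • (z ⊔ -z) := by
    have h0 : (0:L) ≤ (c - m) • (z ⊔ -z) := smul_nonneg (by linarith) habs
    calc m • (z ⊔ -z) ≤ m • (z ⊔ -z) + (c - m) • (z ⊔ -z) := le_add_of_nonneg_right h0
      _ = c • (z ⊔ -z) := by rw [← add_smul]; ring_nf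
  have hsup : (m • z) ⊔ -(m • z) ≤ m • (z ⊔ -z) := by
    apply sup_le
    · exact smul_le_smul_of_nonneg_left le_sup_left hm.le
    · rw [← smul_neg]; exact smul_le_smul_of_nonneg_left le_sup_right hm.le
  exact hsup.trans (hmono.trans hiso)

end Aux

/-- In a Hausdorff locally solid Riesz space, if `V` is a solid neighborhood
of zero such that `V + V + U` is a solid neighborhood of zero for every solid neighborhood
`U` of zero, then any two rough weighted `I`-τ-limit points `x*`, `y*` of `x` satisfy
`(⨅ n, t n) • (x* - y*) ∈ closure (V + V)`. -/
theorem WLimSet_diff_mem_closure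
    {L : Type*} [AddCommGroup L] [Lattice L] [Module ℝ L]
    [CovariantClass L L (· + ·) (· ≤ ·)] [PosSMulMono ℝ L]
    [TopologicalSpace L] [IsTopologicalAddGroup L] [ContinuousSMul ℝ L] [T2Space L]
    (hsolid : ∀ U ∈ 𝓝 (0 : L), ∃ W ∈ 𝓝 (0 : L), W ⊆ U ∧ IsSolidSet W)
    {I : Set (Set ℕ)} (hI : IsAdmissibleIdeal I)
    {t : ℕ → ℝ} (ht : ∃ δ : ℝ, 0 < δ ∧ ∀ n, δ < t n)
    (x : ℕ → L) {V : Set L} (hV : V ∈ 𝓝 (0 : L)) (hVsolid : IsSolidSet V)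
    (hVVU : ∀ U ∈ 𝓝 (0 : L), IsSolidSet U →
      (V + V + U ∈ 𝓝 (0 : L) ∧ IsSolidSet (V + V + U))) :
    ∀ xs ∈ WLimSet I t x V, ∀ ys ∈ WLimSet I t x V,
      (⨅ n : ℕ, t n) • (xs - ys) ∈ closure (V + V) := by
  obtain ⟨δ, hδ, hδt⟩ := ht
  intro xs hxs ys hys
  set m := ⨅ n : ℕ, t n with hm
  have hbdd : BddBelow (Set.range t) := ⟨δ, by rintro _ ⟨n, rfl⟩; exact (hδt n).le⟩
  have hmδ : δ ≤ m := le_ciInf fun n => (hδt n).le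
  have hm0 : 0 < m := hδ.trans_le hmδ
  have hmle : ∀ n, m ≤ t n := fun n => ciInf_le hbdd n
  have claim : ∀ U ∈ 𝓝 (0:L), (m • (xs - ys)) ∈ V + V + U := by
    intro U hU
    obtain ⟨W0, hW0, hW0U, hW0solid⟩ := hsolid U hU
    obtain ⟨W1, hW1, hW1add⟩ := exists_nhds_zero_half hW0
    obtain ⟨W, hW, hWsub, hWsolid⟩ := hsolid W1 hW1
    have hA := hxs W hW
    have hB := hys W hW
    have hunion := hI.2.2.1 _ _ hA hB
    obtain ⟨n, hn1, hn2⟩ : ∃ n, t n • (x n - xs) ∈ V + W ∧ t n • (x n - ys) ∈ V + W := by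
      by_contra h
      push_neg at h
      apply hI.2.2.2
      have heq : {n | t n • (x n - xs) ∉ V + W} ∪ {n | t n • (x n - ys) ∉ V + W}
          = Set.univ := by
        ext k
        simp only [Set.mem_union, Set.mem_setOf_eq, Set.mem_univ, iff_true]
        rcases Classical.em (t k • (x k - xs) ∈ V + W) with h1 | h1
        · exact Or.inr (h k h1)
        · exact Or.inl h1
      rwa [heq] at hunion
    rw [Set.mem_add] at hn1 hn2
    obtain ⟨v1, hv1, w1, hw1, hEq1⟩ := hn1
    obtain ⟨v2, hv2, w2, hw2, hEq2⟩ := hn2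
    have heqn : t n • (xs - ys) = (v2 + -v1) + (w2 + -w1) := by
      have h1 : t n • (xs - ys) = t n • (x n - ys) - t n • (x n - xs) := by
        rw [← smul_sub]; congr 1; abel
      rw [h1, ← hEq1, ← hEq2]; abel
    have htn : t n • (xs - ys) ∈ V + V + W0 := by
      rw [heqn]
      exact Set.add_mem_add (Set.add_mem_add hv2 (neg_mem_of_solid hVsolid hv1))
        (hW1add w2 (hWsub hw2) (-w1) (hWsub (neg_mem_of_solid hWsolid hw1)))
    have hVVW0 := hVVU W0 hW0 hW0solid
    have hmmem : m • (xs - ys) ∈ V + V + W0 :=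
      hVVW0.2 _ _ (key_abs_le hm0 (hmle n) (xs - ys)) htn
    exact Set.add_subset_add_left hW0U hmmem
  rw [mem_closure_iff_nhds]
  intro N hN
  have hU : {u : L | m • (xs - ys) + u ∈ N} ∈ 𝓝 (0:L) := by
    have hten : Filter.Tendsto (fun u : L => m • (xs - ys) + u) (𝓝 0)
        (𝓝 (m • (xs - ys))) := by
      simpa using (tendsto_const_nhds.add tendsto_id :
        Filter.Tendsto _ (𝓝 (0:L)) (𝓝 (m • (xs - ys) + 0)))
    exact hten hN
  obtain ⟨W, hW, hWsub, hWsolid⟩ := hsolid _ hU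
  have hmem := claim W hW
  rw [Set.mem_add] at hmem
  obtain ⟨s, hs, u, hu, hEq⟩ := hmem
  refine ⟨s, ?_, hs⟩
  have hseq : m • (xs - ys) + -u = s := by rw [← hEq]; abel
  rw [← hseq]
  exact hWsub (neg_mem_of_solid hWsolid hu)
end

section
/- Let (L, τ) be a Hausdorff locally solid Riesz space, I an admissible ideal on ℕ, (t_n) a weighted sequence of real numbers, and x = (x_n) a sequence in L. Let V be a solid τ-neighborhood of zero such that V + V + U is again a solid τ-neighborhood of zero for every solid τ-neighborhood U of zero. If in addition V is τ-bounded, then the rough weighted I_τ-limit set WI_τ-LIM^V x is a τ-bounded subset of L. -/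
open Topology Filter Set Pointwise

section Helpers
variable {L : Type*} [AddCommGroup L] [Lattice L] [Module ℝ L]
  [CovariantClass L L (· + ·) (· ≤ ·)] [PosSMulMono ℝ L]

lemma myabs_nonneg' (b : L) : (0:L) ≤ b ⊔ -b := by
  have h : (0:L) ≤ (b ⊔ -b) + (b ⊔ -b) := by
    calc (0:L) = b + (-b) := by simp
    _ ≤ (b ⊔ -b) + (b ⊔ -b) := add_le_add le_sup_left le_sup_right
  have h2 := smul_le_smul_of_nonneg_left h (by norm_num : (0:ℝ) ≤ 1/2)
  have e : ((1:ℝ)/2) • ((b ⊔ -b) + (b ⊔ -b)) = b ⊔ -b := by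
    rw [← two_smul ℝ (b ⊔ -b), smul_smul]; norm_num
  rw [e] at h2; simpa using h2

lemma smul_le_self_of_le_one' {a : L} (ha : (0:L) ≤ a) {c : ℝ} (h0 : 0 ≤ c) (h1 : c ≤ 1) :
    c • a ≤ a := by
  have h : (0:L) ≤ (1 - c) • a := smul_nonneg (by linarith) ha
  have e : a - c • a = (1 - c) • a := by rw [sub_smul, one_smul]
  exact sub_nonneg.mp (e ▸ h)

lemma smul_abs_le' {y : L} {c : ℝ} (h0 : 0 ≤ c) (h1 : c ≤ 1) :
    (c • y) ⊔ -(c • y) ≤ y ⊔ -y := by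
  have key : c • (y ⊔ -y) ≤ y ⊔ -y :=
    smul_le_self_of_le_one' (myabs_nonneg' y) h0 h1
  refine sup_le (le_trans (smul_le_smul_of_nonneg_left le_sup_left h0) key) ?_
  rw [← smul_neg]
  exact le_trans (smul_le_smul_of_nonneg_left le_sup_right h0) key

lemma solid_smul_mem' {S : Set L} (hS : IsSolidSet S) {c : ℝ} (h0 : 0 ≤ c) (h1 : c ≤ 1)
    {b : L} (hb : b ∈ S) : c • b ∈ S :=
  hS _ _ (smul_abs_le' h0 h1) hb

lemma solid_neg_mem' {S : Set L} (hS : IsSolidSet S) {b : L} (hb : b ∈ S) : -b ∈ S :=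
  hS _ _ (by rw [neg_neg, sup_comm]) hb

end Helpers

/-- In a Hausdorff locally solid Riesz space, if `V` is a τ-bounded solid
neighborhood of zero such that `V + V + U` is a solid neighborhood of zero for every solid
neighborhood `U` of zero, then the rough weighted `I`-τ-limit set is τ-bounded. -/
theorem WLimSet_tauBounded
    {L : Type*} [AddCommGroup L] [Lattice L] [Module ℝ L]
    [CovariantClass L L (· + ·) (· ≤ ·)] [PosSMulMono ℝ L]
    [TopologicalSpace L] [IsTopologicalAddGroup L] [ContinuousSMul ℝ L] [T2Space L]
    (hsolid : ∀ U ∈ 𝓝 (0 : L), ∃ W ∈ 𝓝 (0 : L), W ⊆ U ∧ IsSolidSet W)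
    {I : Set (Set ℕ)} (hI : IsAdmissibleIdeal I)
    {t : ℕ → ℝ} (ht : ∃ δ : ℝ, 0 < δ ∧ ∀ n, δ < t n)
    (x : ℕ → L) {V : Set L} (hV : V ∈ 𝓝 (0 : L)) (hVsolid : IsSolidSet V)
    (hVVU : ∀ U ∈ 𝓝 (0 : L), IsSolidSet U →
      (V + V + U ∈ 𝓝 (0 : L) ∧ IsSolidSet (V + V + U)))
    (hVbdd : ∀ U ∈ 𝓝 (0 : L), ∃ lam : ℝ, 0 < lam ∧ V ⊆ lam • U) :
    ∀ U ∈ 𝓝 (0 : L), ∃ lam : ℝ, 0 < lam ∧ WLimSet I t x V ⊆ lam • U := by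

  intro U hU
  obtain ⟨δ, hδpos, hδ⟩ := ht
  rcases Set.eq_empty_or_nonempty (WLimSet I t x V) with hemp | ⟨x0, hx0⟩
  · exact ⟨1, one_pos, by simp [hemp]⟩
  -- choose a solid neighborhood U1 with 4-fold sums in U
  obtain ⟨W4, hW4, hW4sum⟩ := exists_nhds_zero_quarter hU
  obtain ⟨U1, hU1, hU1sub, hU1solid⟩ := hsolid W4 hW4
  have hU1sum : ∀ a ∈ U1, ∀ b ∈ U1, ∀ c ∈ U1, ∀ d ∈ U1, a + b + c + d ∈ U :=
    fun a ha b hb c hc d hd => hW4sum (hU1sub ha) (hU1sub hb) (hU1sub hc) (hU1sub hd)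
  -- bound the base point: x0 ∈ μ0 • U1
  have htends : Filter.Tendsto (fun r : ℝ => r • x0) (𝓝 0) (𝓝 (0 : L)) := by
    have : Continuous fun r : ℝ => r • x0 := continuous_id.smul continuous_const
    simpa using this.tendsto (0 : ℝ)
  have hmem : {r : ℝ | r • x0 ∈ U1} ∈ 𝓝 (0 : ℝ) := htends hU1
  obtain ⟨ε, hεpos, hεball⟩ := Metric.mem_nhds_iff.mp hmem
  set r0 : ℝ := ε / 2 with hr0
  have hr0pos : 0 < r0 := by positivity
  have hr0ball : r0 ∈ Metric.ball (0:ℝ) ε := by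
    rw [Metric.mem_ball, dist_zero_right, Real.norm_eq_abs, abs_of_pos hr0pos, hr0]
    linarith
  have hr0U : r0 • x0 ∈ U1 := hεball hr0ball
  have hr0ne : r0 ≠ 0 := ne_of_gt hr0pos
  set μ0 : ℝ := r0⁻¹ with hμ0
  have hμ0pos : 0 < μ0 := by positivity
  -- bound V: V ⊆ μ1 • U1
  obtain ⟨μ1, hμ1pos, hμ1⟩ := hVbdd U1 hU1
  -- the scalar
  set lam : ℝ := μ0 + μ1 / δ + 1 / δ with hlam
  have hlampos : 0 < lam := by positivity
  have hlamne : lam ≠ 0 := ne_of_gt hlampos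
  have hδne : δ ≠ 0 := ne_of_gt hδpos
  refine ⟨lam, hlampos, fun x' hx' => ?_⟩
  -- key claim: δ • (x' - x0) ∈ V + V + U1
  obtain ⟨W2, hW2, hW2sum⟩ := exists_nhds_zero_half hU1
  obtain ⟨W', hW', hW'sub, hW'solid⟩ := hsolid W2 hW2
  have hA := hx0 W' hW'
  have hB := hx' W' hW'
  have hAB : {n : ℕ | t n • (x n - x0) ∉ V + W'} ∪ {n : ℕ | t n • (x n - x') ∉ V + W'} ∈ I :=
    hI.2.2.1 _ _ hA hB
  have hne : ∃ n, n ∉ ({n : ℕ | t n • (x n - x0) ∉ V + W'} ∪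
      {n : ℕ | t n • (x n - x') ∉ V + W'}) := by
    by_contra h
    push_neg at h
    exact hI.2.2.2 (by
      have : ({n : ℕ | t n • (x n - x0) ∉ V + W'} ∪
          {n : ℕ | t n • (x n - x') ∉ V + W'}) = Set.univ :=
        Set.eq_univ_of_forall h
      rwa [this] at hAB)
  obtain ⟨n, hn⟩ := hne
  simp only [Set.mem_union, Set.mem_setOf_eq, not_or, not_not] at hn
  obtain ⟨hn0, hn'⟩ := hn
  obtain ⟨v1, hv1, w1, hw1, hvw1⟩ := hn0
  obtain ⟨v2, hv2, w2, hw2, hvw2⟩ := hn'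
  have hvw1' : v1 + w1 = t n • (x n - x0) := hvw1
  have hvw2' : v2 + w2 = t n • (x n - x') := hvw2
  have hdiff : t n • (x' - x0) = (v1 + -v2) + (w1 + -w2) := by
    have h : t n • (x' - x0) = t n • (x n - x0) - t n • (x n - x') := by
      rw [← smul_sub]; congr 1; abel
    rw [h, ← hvw1', ← hvw2']; abel
  have hVVU1 := hVVU U1 hU1 hU1solid
  have hmemVVU : t n • (x' - x0) ∈ V + V + U1 := by
    rw [hdiff]
    have h1 : v1 + -v2 ∈ V + V := Set.add_mem_add hv1 (solid_neg_mem' hVsolid hv2)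
    have h2 : w1 + -w2 ∈ U1 :=
      hW2sum _ (hW'sub hw1) _ (hW'sub (solid_neg_mem' hW'solid hw2))
    exact Set.add_mem_add h1 h2
  have htn : δ < t n := hδ n
  have htnpos : 0 < t n := lt_trans hδpos htn
  have hδsmul : δ • (x' - x0) ∈ V + V + U1 := by
    have hc0 : 0 ≤ δ / t n := by positivity
    have hc1 : δ / t n ≤ 1 := by
      rw [div_le_one htnpos]; linarith
    have he : δ • (x' - x0) = (δ / t n) • (t n • (x' - x0)) := by
      rw [smul_smul, div_mul_cancel₀]
      exact ne_of_gt htnpos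
    rw [he]
    exact solid_smul_mem' hVVU1.2 hc0 hc1 hmemVVU
  -- decompose and conclude
  obtain ⟨vv, hvv, w, hw, hvvw⟩ := hδsmul
  obtain ⟨u1, hu1, u2, hu2, huu⟩ := hvv
  have hvvw' : vv + w = δ • (x' - x0) := hvvw
  have huu' : u1 + u2 = vv := huu
  have hsum3 : u1 + u2 + w = δ • (x' - x0) := by rw [← hvvw', ← huu']
  have h1 : δ⁻¹ • (δ • (x' - x0)) = x' - x0 := inv_smul_smul₀ hδne _
  have h2 : x' - x0 = δ⁻¹ • u1 + δ⁻¹ • u2 + δ⁻¹ • w := by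
    rw [← h1, ← hsum3, smul_add, smul_add]
  have hx'eq : x' = x0 + (δ⁻¹ • u1 + δ⁻¹ • u2 + δ⁻¹ • w) := by
    rw [← h2]; abel
  rw [Set.mem_smul_set_iff_inv_smul_mem₀ (ne_of_gt hlampos)]
  -- each scaled piece lies in U1
  have hp1 : lam⁻¹ • x0 ∈ U1 := by
    have hx0eq : lam⁻¹ • x0 = (μ0 / lam) • (r0 • x0) := by
      rw [smul_smul]
      congr 1
      rw [hμ0]
      field_simp
    rw [hx0eq]
    refine solid_smul_mem' hU1solid (by positivity) ?_ hr0U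
    rw [div_le_one hlampos, hlam]
    have : 0 < μ1 / δ := by positivity
    have : 0 < 1 / δ := by positivity
    linarith
  have hVpiece : ∀ v ∈ V, lam⁻¹ • (δ⁻¹ • v) ∈ U1 := by
    intro v hv
    obtain ⟨u, hu, huv⟩ := hμ1 hv
    have huv' : μ1 • u = v := huv
    have heq : lam⁻¹ • (δ⁻¹ • v) = (μ1 / (lam * δ)) • u := by
      rw [← huv', smul_smul, smul_smul]
      congr 1
      field_simp
    rw [heq]
    refine solid_smul_mem' hU1solid (by positivity) ?_ hu
    rw [div_le_one (by positivity)]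
    have h1 : μ1 / δ ≤ lam := by
      rw [hlam]
      have h2 : 0 < μ0 := hμ0pos
      have h3 : 0 < 1 / δ := by positivity
      linarith
    calc μ1 = (μ1 / δ) * δ := by field_simp
    _ ≤ lam * δ := by
        apply mul_le_mul_of_nonneg_right h1 (le_of_lt hδpos)
  have hp2 : lam⁻¹ • (δ⁻¹ • u1) ∈ U1 := hVpiece u1 hu1
  have hp3 : lam⁻¹ • (δ⁻¹ • u2) ∈ U1 := hVpiece u2 hu2
  have hp4 : lam⁻¹ • (δ⁻¹ • w) ∈ U1 := by
    have heq : lam⁻¹ • (δ⁻¹ • w) = (1 / (lam * δ)) • w := by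
      rw [smul_smul]; congr 1; rw [one_div, mul_inv]
    rw [heq]
    refine solid_smul_mem' hU1solid (by positivity) ?_ hw
    rw [div_le_one (by positivity)]
    have h1 : 1 / δ ≤ lam := by
      rw [hlam]
      have h2 : 0 < μ0 := hμ0pos
      have h3 : 0 < μ1 / δ := by positivity
      linarith
    calc (1:ℝ) = (1 / δ) * δ := by field_simp
    _ ≤ lam * δ := mul_le_mul_of_nonneg_right h1 (le_of_lt hδpos)
  have hsum := hU1sum _ hp1 _ hp2 _ hp3 _ hp4
  have hfinal : lam⁻¹ • x' =
      lam⁻¹ • x0 + lam⁻¹ • (δ⁻¹ • u1) + lam⁻¹ • (δ⁻¹ • u2) + lam⁻¹ • (δ⁻¹ • w) := by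
    rw [hx'eq, smul_add, smul_add, smul_add]; abel
  rwa [hfinal]
end

section
/- Let (L, τ) be a locally solid Riesz space whose topology is first countable, I an admissible ideal on ℕ, (t_n) a weighted sequence of real numbers, x = (x_n) a sequence in L, and V any τ-neighborhood of zero. If the weighted sequence (t_n) is I-bounded, then the rough weighted I_τ-limit set WI_τ-LIM^V x is a closed subset of L. -/
open Topology Filter Set Pointwise

/-- Auxiliary: a solid set is closed under scaling by `s ∈ [0, 1]`. -/
lemma solid_smul_mem {L : Type*} [AddCommGroup L] [Lattice L] [Module ℝ L]
    [CovariantClass L L (· + ·) (· ≤ ·)] [PosSMulMono ℝ L]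
    {W : Set L} (hW : IsSolidSet W) {w : L} (hw : w ∈ W)
    {s : ℝ} (hs0 : 0 ≤ s) (hs1 : s ≤ 1) : s • w ∈ W := by
  apply hW _ w _ hw
  have h3 : (0:L) ≤ w ⊔ -w := by
    have h2 : (0:L) ≤ (w ⊔ -w) + (w ⊔ -w) := by
      calc (0:L) = w + (-w) := by simp
      _ ≤ (w ⊔ -w) + (w ⊔ -w) := add_le_add le_sup_left le_sup_right
    have := smul_le_smul_of_nonneg_left h2 (by norm_num : (0:ℝ) ≤ 1/2)
    simpa [smul_add, smul_smul, ← add_smul,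
      show (2:ℝ)⁻¹ + 2⁻¹ = 1 by norm_num] using this
  have h4 : s • (w ⊔ -w) ≤ w ⊔ -w := by
    have hnn : (0:L) ≤ (1 - s) • (w ⊔ -w) := by
      have := smul_le_smul_of_nonneg_left h3 (by linarith : (0:ℝ) ≤ 1 - s)
      simpa using this
    calc s • (w ⊔ -w) ≤ s • (w ⊔ -w) + (1 - s) • (w ⊔ -w) :=
          le_add_of_nonneg_right hnn
      _ = w ⊔ -w := by rw [← add_smul]; ring_nf; rw [one_smul]
  have h1 : s • w ≤ s • (w ⊔ -w) := smul_le_smul_of_nonneg_left le_sup_left hs0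
  have h2 : -(s • w) ≤ s • (w ⊔ -w) := by
    rw [← smul_neg]; exact smul_le_smul_of_nonneg_left le_sup_right hs0
  exact sup_le (h1.trans h4) (h2.trans h4)

/-- In a first-countable locally solid Riesz space, if the weighted sequence
`t` is `I`-bounded, then the rough weighted `I`-τ-limit set is closed. -/
theorem WLimSet_isClosed_of_Ibounded
    {L : Type*} [AddCommGroup L] [Lattice L] [Module ℝ L]
    [CovariantClass L L (· + ·) (· ≤ ·)] [PosSMulMono ℝ L]
    [TopologicalSpace L] [IsTopologicalAddGroup L] [ContinuousSMul ℝ L]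
    [FirstCountableTopology L]
    (hsolid : ∀ U ∈ 𝓝 (0 : L), ∃ W ∈ 𝓝 (0 : L), W ⊆ U ∧ IsSolidSet W)
    {I : Set (Set ℕ)} (hI : IsAdmissibleIdeal I)
    {t : ℕ → ℝ} (ht : ∃ δ : ℝ, 0 < δ ∧ ∀ n, δ < t n)
    (htI : ∃ M : ℝ, 0 < M ∧ {n : ℕ | M ≤ t n} ∈ I)
    (x : ℕ → L) {V : Set L} (hV : V ∈ 𝓝 (0 : L)) :
    IsClosed (WLimSet I t x V) := by
  apply isClosed_of_closure_subset
  intro y hy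
  obtain ⟨δ, hδ, hδt⟩ := ht
  obtain ⟨M, hM, hMI⟩ := htI
  intro U hU
  obtain ⟨U₁, hU₁, hU₁U⟩ := exists_nhds_zero_half hU
  obtain ⟨W, hW, hWU₁, hWsolid⟩ := hsolid U₁ hU₁
  have hN : {z : L | M • (z - y) ∈ W} ∈ 𝓝 y := by
    have hc : Continuous fun z : L => M • (z - y) :=
      continuous_const.smul (continuous_id.sub continuous_const)
    have h0 : (fun z : L => M • (z - y)) y = 0 := by simp
    have := hc.continuousAt (x := y) (h0 ▸ hW)
    exact this
  obtain ⟨x', hx'N, hx'mem⟩ := mem_closure_iff_nhds.mp hy _ hN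
  have hA : {n : ℕ | t n • (x n - x') ∉ V + W} ∈ I := hx'mem W hW
  refine hI.2.1 _ _ (hI.2.2.1 _ _ hA hMI) ?_
  intro n hn
  simp only [Set.mem_setOf_eq] at hn
  by_contra h
  simp only [Set.mem_union, Set.mem_setOf_eq, not_or, not_not, not_le] at h
  obtain ⟨h1, h2⟩ := h
  apply hn
  obtain ⟨v, hv, w₁, hw₁, hvw⟩ := Set.mem_add.mp h1
  have htn : 0 < t n := hδ.trans (hδt n)
  have hs0 : 0 ≤ t n / M := div_nonneg htn.le hM.le
  have hs1 : t n / M ≤ 1 := (div_le_one hM).mpr h2.le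
  have hw₂ : (t n / M) • (M • (x' - y)) ∈ W :=
    solid_smul_mem hWsolid hx'N hs0 hs1
  have heq : (t n / M) • (M • (x' - y)) = t n • (x' - y) := by
    rw [smul_smul, div_mul_cancel₀ _ hM.ne']
  refine Set.mem_add.mpr ⟨v, hv, w₁ + (t n / M) • (M • (x' - y)),
    hU₁U _ (hWU₁ hw₁) _ (hWU₁ hw₂), ?_⟩
  rw [← add_assoc, hvw, heq, ← smul_add, sub_add_sub_cancel]
end

section
/- Let (L, τ) be a Hausdorff locally solid Riesz space, I an admissible ideal on ℕ, (t_n) a weighted sequence of real numbers, x = (x_n) a sequence in L, and V a τ-bounded τ-neighborhood of zero. If the weighted sequence (t_n) is not I-bounded, then the rough weighted I_τ-limit set WI_τ-LIM^V x is a closed subset of L (indeed it is empty or a singleton). -/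
open Topology Filter Set Pointwise

/-- In a Hausdorff locally solid Riesz space, if the weighted sequence `t`
is not `I`-bounded and the neighborhood `V` of zero is τ-bounded, then the rough weighted
`I`-τ-limit set is closed (indeed it is empty or a singleton). -/
theorem WLimSet_isClosed_of_not_Ibounded
    {L : Type*} [AddCommGroup L] [Lattice L] [Module ℝ L]
    [CovariantClass L L (· + ·) (· ≤ ·)] [PosSMulMono ℝ L]
    [TopologicalSpace L] [IsTopologicalAddGroup L] [ContinuousSMul ℝ L] [T2Space L]
    (hsolid : ∀ U ∈ 𝓝 (0 : L), ∃ W ∈ 𝓝 (0 : L), W ⊆ U ∧ IsSolidSet W)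
    {I : Set (Set ℕ)} (hI : IsAdmissibleIdeal I)
    {t : ℕ → ℝ} (ht : ∃ δ : ℝ, 0 < δ ∧ ∀ n, δ < t n)
    (htI : ¬ ∃ M : ℝ, 0 < M ∧ {n : ℕ | M ≤ t n} ∈ I)
    (x : ℕ → L) {V : Set L} (hV : V ∈ 𝓝 (0 : L))
    (hVbdd : ∀ U ∈ 𝓝 (0 : L), ∃ lam : ℝ, 0 < lam ∧ V ⊆ lam • U) :
    IsClosed (WLimSet I t x V) ∧
      (WLimSet I t x V = ∅ ∨ ∃ a : L, WLimSet I t x V = {a}) := by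
  have hsub : (WLimSet I t x V).Subsingleton := by
    intro a ha b hb
    by_contra hne
    have key : ∀ N ∈ 𝓝 (0:L), a - b ∈ N := by
      intro N hN
      obtain ⟨W2, hW2, hW2add⟩ := exists_nhds_zero_half hN
      obtain ⟨W3, hW3, hW3add⟩ := exists_nhds_zero_half hW2
      obtain ⟨W1, ⟨hW1, hbal⟩, hW1sub⟩ := (nhds_basis_balanced ℝ L).mem_iff.mp hW3
      obtain ⟨lam, hlam, hVsub⟩ := hVbdd W1 hW1
      set μ : ℝ := max lam 1 with hμdef
      have hμ1 : (1:ℝ) ≤ μ := le_max_right _ _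
      have hμpos : (0:ℝ) < μ := lt_of_lt_of_le one_pos hμ1
      have hA := ha W1 hW1
      have hB := hb W1 hW1
      have hU : {n | μ ≤ t n} ∉ I := fun h => htI ⟨μ, hμpos, h⟩
      have hAB : {n : ℕ | t n • (x n - a) ∉ V + W1} ∪ {n : ℕ | t n • (x n - b) ∉ V + W1} ∈ I :=
        hI.2.2.1 _ _ hA hB
      have hnot : ¬ {n | μ ≤ t n} ⊆
          ({n : ℕ | t n • (x n - a) ∉ V + W1} ∪ {n : ℕ | t n • (x n - b) ∉ V + W1}) :=
        fun hss => hU (hI.2.1 _ _ hAB hss)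
      obtain ⟨n, hn, hnAB⟩ := not_subset.mp hnot
      simp only [Set.mem_union, Set.mem_setOf_eq, not_or, not_not] at hnAB
      obtain ⟨hna, hnb⟩ := hnAB
      have hn' : μ ≤ t n := hn
      have htn1 : (1:ℝ) ≤ t n := le_trans hμ1 hn'
      have htnpos : (0:ℝ) < t n := lt_of_lt_of_le one_pos htn1
      obtain ⟨v1, hv1, w1, hw1, h1⟩ := Set.mem_add.mp hna
      obtain ⟨v2, hv2, w2, hw2, h2⟩ := Set.mem_add.mp hnb
      obtain ⟨u1, hu1, hu1eq⟩ := mem_smul_set.mp (hVsub hv1)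
      obtain ⟨u2, hu2, hu2eq⟩ := mem_smul_set.mp (hVsub hv2)
      set c1 : ℝ := (t n)⁻¹ * lam with hc1def
      set c2 : ℝ := (t n)⁻¹ with hc2def
      have hc1 : ‖c1‖ ≤ 1 := by
        rw [Real.norm_eq_abs, abs_of_nonneg (by positivity)]
        rw [inv_mul_le_iff₀ htnpos, mul_one]
        exact le_trans (le_max_left lam 1) hn'
      have hc2 : ‖c2‖ ≤ 1 := by
        rw [Real.norm_eq_abs, abs_of_nonneg (by positivity)]
        exact inv_le_one_of_one_le₀ htn1
      have hnegc1 : ‖-c1‖ ≤ 1 := by rwa [norm_neg]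
      have hnegc2 : ‖-c2‖ ≤ 1 := by rwa [norm_neg]
      have m1 : c1 • u2 ∈ W3 := hW1sub (hbal.smul_mem hc1 hu2)
      have m2 : c2 • w2 ∈ W3 := hW1sub (hbal.smul_mem hc2 hw2)
      have m3 : (-c1) • u1 ∈ W3 := hW1sub (hbal.smul_mem hnegc1 hu1)
      have m4 : (-c2) • w1 ∈ W3 := hW1sub (hbal.smul_mem hnegc2 hw1)
      have p1 : c1 • u2 + c2 • w2 ∈ W2 := hW3add _ m1 _ m2
      have p2 : (-c1) • u1 + (-c2) • w1 ∈ W2 := hW3add _ m3 _ m4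
      have hsum : (c1 • u2 + c2 • w2) + ((-c1) • u1 + (-c2) • w1) ∈ N := hW2add _ p1 _ p2
      have heq : a - b = (c1 • u2 + c2 • w2) + ((-c1) • u1 + (-c2) • w1) := by
        have e1 : t n • (x n - a) = lam • u1 + w1 := by rw [hu1eq, h1]
        have e2 : t n • (x n - b) = lam • u2 + w2 := by rw [hu2eq, h2]
        have e3 : t n • (a - b) = (lam • u2 + w2) - (lam • u1 + w1) := by
          rw [← e1, ← e2, ← smul_sub]
          congr 1
          abel
        have e4 : a - b = (t n)⁻¹ • (t n • (a - b)) := by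
          rw [inv_smul_smul₀ (ne_of_gt htnpos)]
        rw [e4, e3, hc1def, hc2def]
        rw [smul_sub, smul_add, smul_add, smul_smul, smul_smul]
        simp only [neg_smul]
        abel
      rw [heq]
      exact hsum
    apply hne
    by_contra hab
    have hd : a - b ≠ 0 := sub_ne_zero.mpr hab
    have hopen : ({a - b}ᶜ : Set L) ∈ 𝓝 (0:L) :=
      IsOpen.mem_nhds isOpen_compl_singleton (by simpa using (Ne.symm hd))
    exact (key _ hopen) rfl
  rcases hsub.eq_empty_or_singleton with h | h
  · exact ⟨h ▸ isClosed_empty, Or.inl h⟩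
  · obtain ⟨c, hc⟩ := h
    exact ⟨hc ▸ isClosed_singleton, Or.inr ⟨c, hc⟩⟩
end

section
/- Let (L, τ) be a locally solid Riesz space, I an admissible ideal on ℕ, (t_n) a weighted sequence of real numbers, and x = (x_n) a sequence in L. If x is weighted I_τ-bounded, then for every τ-neighborhood V of zero there exists a real number μ > 0 such that the rough weighted I_τ-limit set WI_τ-LIM^{μV} x (with degree of roughness μ·V) is nonempty; in fact it contains the zero element of L. -/
open Topology Filter Set Pointwise

/-- In a locally solid Riesz space, if the sequence `x` is weighted
`I`-τ-bounded, then for every neighborhood `V` of zero there is `μ > 0` such that the rough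
weighted `I`-τ-limit set with degree of roughness `μ • V` is nonempty; in fact it contains
the zero element. -/
theorem WLimSet_nonempty_of_weighted_bounded
    {L : Type*} [AddCommGroup L] [Lattice L] [Module ℝ L]
    [CovariantClass L L (· + ·) (· ≤ ·)] [PosSMulMono ℝ L]
    [TopologicalSpace L] [IsTopologicalAddGroup L] [ContinuousSMul ℝ L]
    (hsolid : ∀ U ∈ 𝓝 (0 : L), ∃ W ∈ 𝓝 (0 : L), W ⊆ U ∧ IsSolidSet W)
    {I : Set (Set ℕ)} (hI : IsAdmissibleIdeal I)
    {t : ℕ → ℝ} (ht : ∃ δ : ℝ, 0 < δ ∧ ∀ n, δ < t n)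
    (x : ℕ → L)
    (hxb : ∀ U ∈ 𝓝 (0 : L), ∃ lam : ℝ, 0 < lam ∧ {n : ℕ | (lam * t n) • x n ∉ U} ∈ I) :
    ∀ V ∈ 𝓝 (0 : L), ∃ μ : ℝ, 0 < μ ∧
      (WLimSet I t x (μ • V)).Nonempty ∧ (0 : L) ∈ WLimSet I t x (μ • V) := by
  intro V hV
  obtain ⟨lam, hlam, hlamI⟩ := hxb V hV
  refine ⟨lam⁻¹, by positivity, ?_⟩
  have h0 : (0 : L) ∈ WLimSet I t x (lam⁻¹ • V) := by
    intro U hU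
    refine hI.2.1 _ _ hlamI ?_
    intro n hn
    simp only [Set.mem_setOf_eq, sub_zero] at hn ⊢
    intro hmem
    apply hn
    have : t n • x n ∈ lam⁻¹ • V := by
      have := Set.smul_mem_smul_set (a := lam⁻¹) hmem
      rwa [smul_smul, inv_mul_cancel_left₀ hlam.ne'] at this
    have h2 : t n • x n + 0 ∈ lam⁻¹ • V + U := Set.add_mem_add this (mem_of_mem_nhds hU)
    rwa [add_zero] at h2
  exact ⟨⟨0, h0⟩, h0⟩
end

section
/- Let (L, τ) be a locally solid Riesz space whose topology is first countable, I an admissible ideal on ℕ, (t_n) a weighted sequence of real numbers, and x = (x_n) a sequence in L. If the weighted sequence (t_n) is I-bounded, then the weighted I_τ-cluster point set W_IΓ_x^τ is a closed subset of L. -/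
open Topology Filter Set Pointwise

/-- In a first-countable locally solid Riesz space, if the weighted sequence
`t` is `I`-bounded, then the set of weighted `I`-τ-cluster points of `x` is closed. -/
theorem WClusterSet_isClosed_of_Ibounded
    {L : Type*} [AddCommGroup L] [Lattice L] [Module ℝ L]
    [CovariantClass L L (· + ·) (· ≤ ·)] [PosSMulMono ℝ L]
    [TopologicalSpace L] [IsTopologicalAddGroup L] [ContinuousSMul ℝ L]
    [FirstCountableTopology L]
    (hsolid : ∀ U ∈ 𝓝 (0 : L), ∃ W ∈ 𝓝 (0 : L), W ⊆ U ∧ IsSolidSet W)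
    {I : Set (Set ℕ)} (hI : IsAdmissibleIdeal I)
    {t : ℕ → ℝ} (ht : ∃ δ : ℝ, 0 < δ ∧ ∀ n, δ < t n)
    (htI : ∃ M : ℝ, 0 < M ∧ {n : ℕ | M ≤ t n} ∈ I)
    (x : ℕ → L) :
    IsClosed (WClusterSet I t x) := by
  obtain ⟨δ, hδ, hδt⟩ := ht
  obtain ⟨M, hM, hMI⟩ := htI
  obtain ⟨hfin, hsub, hun, huniv⟩ := hI
  apply isClosed_of_closure_subset
  intro c hc U hU hTI
  -- Split U into two halves and find a solid neighborhood inside a half.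
  obtain ⟨V, hV, hVU⟩ := exists_nhds_zero_half hU
  obtain ⟨W, hW, hWV, hWsolid⟩ := hsolid V hV
  -- Find a cluster point c' close to c, in the sense that M • (c' - c) ∈ W.
  have hcont : ContinuousAt (fun c' : L => M • (c' - c)) c := by fun_prop
  have hN : (fun c' : L => M • (c' - c)) ⁻¹' W ∈ 𝓝 c := by
    apply hcont.preimage_mem_nhds
    simpa using hW
  obtain ⟨c', hc'N, hc'S⟩ := mem_closure_iff_nhds.mp hc _ hN
  have hc'W : M • (c' - c) ∈ W := hc'N
  -- For n with t n < M, the element t n • (c' - c) is in W by solidity.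
  have key : ∀ n : ℕ, t n < M → t n • (c' - c) ∈ W := by
    intro n hn
    set w := c' - c with hw
    have htn : (0 : ℝ) < t n := lt_trans hδ (hδt n)
    set v := w ⊔ -w with hv
    have hwv : w ≤ v := le_sup_left
    have hnwv : -w ≤ v := le_sup_right
    have hv0 : (0 : L) ≤ v := by
      have : |w| = v := rfl
      rw [← this]
      exact abs_nonneg w
    have h1 : t n • w ⊔ -(t n • w) ≤ t n • v := by
      apply sup_le
      · exact smul_le_smul_of_nonneg_left hwv htn.le
      · rw [← smul_neg]
        exact smul_le_smul_of_nonneg_left hnwv htn.le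
    have h2 : t n • v ≤ M • v := by
      have h0 : (0 : L) ≤ (M - t n) • v := smul_nonneg (by linarith) hv0
      rw [sub_smul, sub_nonneg] at h0
      exact h0
    have h3 : M • v ≤ M • w ⊔ -(M • w) := by
      have hMi : (0 : ℝ) ≤ M⁻¹ := by positivity
      have keyv : v ≤ M⁻¹ • (M • w ⊔ -(M • w)) := by
        apply sup_le
        · calc w = M⁻¹ • (M • w) := by
                rw [smul_smul, inv_mul_cancel₀ hM.ne', one_smul]
            _ ≤ M⁻¹ • (M • w ⊔ -(M • w)) :=
                smul_le_smul_of_nonneg_left le_sup_left hMi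
        · calc -w = M⁻¹ • (-(M • w)) := by
                rw [smul_neg, smul_smul, inv_mul_cancel₀ hM.ne', one_smul]
            _ ≤ M⁻¹ • (M • w ⊔ -(M • w)) :=
                smul_le_smul_of_nonneg_left le_sup_right hMi
      calc M • v ≤ M • (M⁻¹ • (M • w ⊔ -(M • w))) :=
            smul_le_smul_of_nonneg_left keyv hM.le
        _ = M • w ⊔ -(M • w) := by
            rw [smul_smul, mul_inv_cancel₀ hM.ne', one_smul]
    exact hWsolid _ _ (h1.trans (h2.trans h3)) hc'W
  -- Set inclusion: the W-cluster set of c' is contained in the union.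
  have hincl : {n : ℕ | t n • (x n - c') ∈ W} ⊆
      {n : ℕ | t n • (x n - c) ∈ U} ∪ {n : ℕ | M ≤ t n} := by
    intro n hn
    by_cases hcase : M ≤ t n
    · exact Or.inr hcase
    · left
      show t n • (x n - c) ∈ U
      have e : t n • (x n - c) = t n • (x n - c') + t n • (c' - c) := by
        rw [← smul_add]
        congr 1
        abel
      rw [e]
      exact hVU _ (hWV hn) _ (hWV (key n (not_le.mp hcase)))
  -- Contradiction with c' being a cluster point.
  exact hc'S W hW (hsub _ _ (hun _ _ hTI hMI) hincl)
end

section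
/- Let (L, τ) be a locally solid Riesz space, I an admissible ideal on ℕ, (t_n) a weighted sequence of real numbers, and x = (x_n) a sequence in L. If c ∈ L is a weighted I_τ-cluster point of the sequence (x_n), then |c| is a weighted I_τ-cluster point of the sequence (|x_n|), where |x| = x ⊔ (−x). -/
open Topology Filter Set Pointwise

private lemma smul_abs_le {L : Type*} [AddCommGroup L] [Lattice L] [Module ℝ L]
    [CovariantClass L L (· + ·) (· ≤ ·)] [PosSMulMono ℝ L]
    {r : ℝ} (hr : 0 < r) {a b : L} (h : a ⊔ -a ≤ b ⊔ -b) :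
    (r • a) ⊔ -(r • a) ≤ (r • b) ⊔ -(r • b) := by
  have h1 : r • a ≤ r • (b ⊔ -b) := by
    apply smul_le_smul_of_nonneg_left _ hr.le
    exact le_trans (le_trans le_sup_left h) le_rfl
  have h2 : r • (-a) ≤ r • (b ⊔ -b) :=
    smul_le_smul_of_nonneg_left (le_trans le_sup_right h) hr.le
  have key : r • (b ⊔ -b) ≤ (r • b) ⊔ -(r • b) := by
    have hb : b ⊔ -b ≤ r⁻¹ • ((r • b) ⊔ -(r • b)) := by
      apply sup_le
      · calc b = r⁻¹ • (r • b) := by rw [inv_smul_smul₀ hr.ne']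
          _ ≤ r⁻¹ • ((r • b) ⊔ -(r • b)) :=
            smul_le_smul_of_nonneg_left le_sup_left (inv_pos.2 hr).le
      · calc -b = r⁻¹ • (-(r • b)) := by rw [smul_neg, inv_smul_smul₀ hr.ne']
          _ ≤ r⁻¹ • ((r • b) ⊔ -(r • b)) :=
            smul_le_smul_of_nonneg_left le_sup_right (inv_pos.2 hr).le
    calc r • (b ⊔ -b) ≤ r • (r⁻¹ • ((r • b) ⊔ -(r • b))) :=
          smul_le_smul_of_nonneg_left hb hr.le
      _ = (r • b) ⊔ -(r • b) := by rw [smul_inv_smul₀ hr.ne']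
  refine sup_le (h1.trans key) ?_
  rw [← smul_neg]
  exact h2.trans key

/-- In a locally solid Riesz space, if `c` is a weighted `I`-τ-cluster point
of `(x n)`, then `|c| = c ⊔ -c` is a weighted `I`-τ-cluster point of `(|x n|)`. -/
theorem abs_mem_WClusterSet
    {L : Type*} [AddCommGroup L] [Lattice L] [Module ℝ L]
    [CovariantClass L L (· + ·) (· ≤ ·)] [PosSMulMono ℝ L]
    [TopologicalSpace L] [IsTopologicalAddGroup L] [ContinuousSMul ℝ L]
    (hsolid : ∀ U ∈ 𝓝 (0 : L), ∃ W ∈ 𝓝 (0 : L), W ⊆ U ∧ IsSolidSet W)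
    {I : Set (Set ℕ)} (hI : IsAdmissibleIdeal I)
    {t : ℕ → ℝ} (ht : ∃ δ : ℝ, 0 < δ ∧ ∀ n, δ < t n)
    (x : ℕ → L) (c : L) (hc : c ∈ WClusterSet I t x) :
    (c ⊔ -c) ∈ WClusterSet I t (fun n => x n ⊔ -(x n)) := by
  intro U hU
  obtain ⟨W, hW, hWU, hWsolid⟩ := hsolid U hU
  obtain ⟨δ, hδ, hδt⟩ := ht
  intro hmem
  apply hc W hW
  refine hI.2.1 _ _ hmem ?_
  intro n hn
  simp only [Set.mem_setOf_eq] at hn ⊢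
  have habs : (x n ⊔ -(x n) - (c ⊔ -c)) ⊔ -(x n ⊔ -(x n) - (c ⊔ -c))
      ≤ (x n - c) ⊔ -(x n - c) := abs_abs_sub_abs_le (x n) c
  have htn : (0:ℝ) < t n := hδ.trans (hδt n)
  have := smul_abs_le htn habs
  exact hWU (hWsolid _ _ this hn)
end

section
/- Let (L, τ) be a locally solid Riesz space, I an admissible ideal on ℕ, (t_n) a weighted sequence of real numbers, and x = (x_n) a sequence in L. If c ∈ L is a weighted I_τ-cluster point of the sequence (x_n), then the positive part c⁺ = c ⊔ 0 is a weighted I_τ-cluster point of the sequence (x_n⁺) of positive parts. -/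
open Topology Filter Set Pointwise

/-- In a locally solid Riesz space, if `c` is a weighted `I`-τ-cluster point
of `(x n)`, then the positive part `c⁺ = c ⊔ 0` is a weighted `I`-τ-cluster point of the sequence of positive parts `(x n ⊔ 0)`. -/
theorem posPart_mem_WClusterSet
    {L : Type*} [AddCommGroup L] [Lattice L] [Module ℝ L]
    [CovariantClass L L (· + ·) (· ≤ ·)] [PosSMulMono ℝ L]
    [TopologicalSpace L] [IsTopologicalAddGroup L] [ContinuousSMul ℝ L]
    (hsolid : ∀ U ∈ 𝓝 (0 : L), ∃ W ∈ 𝓝 (0 : L), W ⊆ U ∧ IsSolidSet W)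
    {I : Set (Set ℕ)} (hI : IsAdmissibleIdeal I)
    {t : ℕ → ℝ} (ht : ∃ δ : ℝ, 0 < δ ∧ ∀ n, δ < t n)
    (x : ℕ → L) (c : L) (hc : c ∈ WClusterSet I t x) :
    (c ⊔ 0) ∈ WClusterSet I t (fun n => x n ⊔ 0) := by
  intro U hU hcontra
  obtain ⟨W, hW, hWU, hWsolid⟩ := hsolid U hU
  obtain ⟨δ, hδ, hδt⟩ := ht
  refine hc W hW (hI.2.1 _ _ hcontra ?_)
  intro n hn
  simp only [Set.mem_setOf_eq] at hn ⊢
  have htn : (0:ℝ) < t n := hδ.trans (hδt n)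
  set e : L ≃o L := OrderIso.smulRight (β := L) htn with he
  have hsmul : ∀ a b : L, t n • (a ⊔ b) = t n • a ⊔ t n • b := fun a b => e.map_sup a b
  apply hWU
  refine hWsolid _ _ ?_ hn
  have key : (x n ⊔ 0 - c ⊔ 0) ⊔ -(x n ⊔ 0 - c ⊔ 0) ≤ (x n - c) ⊔ -(x n - c) := by
    have h1 := abs_sup_sub_sup_le_abs (x n) c 0
    simpa [abs] using h1
  calc t n • (x n ⊔ 0 - c ⊔ 0) ⊔ -(t n • (x n ⊔ 0 - c ⊔ 0))
      = t n • ((x n ⊔ 0 - c ⊔ 0) ⊔ -(x n ⊔ 0 - c ⊔ 0)) := by rw [hsmul, smul_neg]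
    _ ≤ t n • ((x n - c) ⊔ -(x n - c)) := smul_le_smul_of_nonneg_left key htn.le
    _ = t n • (x n - c) ⊔ -(t n • (x n - c)) := by rw [hsmul, smul_neg]
end

section
/- Let (L, τ) be a locally solid Riesz space, I an admissible ideal on ℕ, (t_n) a weighted sequence of real numbers, and x = (x_n) a sequence in L. If c ∈ L is a weighted I_τ-cluster point of the sequence (x_n), then the negative part c⁻ = (−c) ⊔ 0 is a weighted I_τ-cluster point of the sequence (x_n⁻) of negative parts. -/
open Topology Filter Set Pointwise

private lemma smul_sup_eq {L : Type*} [AddCommGroup L] [Lattice L] [Module ℝ L]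
    [CovariantClass L L (· + ·) (· ≤ ·)] [PosSMulMono ℝ L]
    {r : ℝ} (hr : 0 < r) (a b : L) : r • (a ⊔ b) = (r • a) ⊔ (r • b) := by
  apply le_antisymm
  · have h : a ⊔ b ≤ r⁻¹ • ((r • a) ⊔ (r • b)) := by
      apply sup_le
      · calc a = r⁻¹ • (r • a) := by rw [inv_smul_smul₀ hr.ne']
          _ ≤ r⁻¹ • ((r • a) ⊔ (r • b)) :=
            smul_le_smul_of_nonneg_left le_sup_left (by positivity)
      · calc b = r⁻¹ • (r • b) := by rw [inv_smul_smul₀ hr.ne']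
          _ ≤ r⁻¹ • ((r • a) ⊔ (r • b)) :=
            smul_le_smul_of_nonneg_left le_sup_right (by positivity)
    calc r • (a ⊔ b) ≤ r • (r⁻¹ • ((r • a) ⊔ (r • b))) :=
          smul_le_smul_of_nonneg_left h hr.le
      _ = (r • a) ⊔ (r • b) := by rw [smul_inv_smul₀ hr.ne']
  · exact sup_le (smul_le_smul_of_nonneg_left le_sup_left hr.le)
      (smul_le_smul_of_nonneg_left le_sup_right hr.le)

/-- In a locally solid Riesz space, if `c` is a weighted `I`-τ-cluster point
of `(x n)`, then the negative part `c⁻ = (-c) ⊔ 0` is a weighted `I`-τ-cluster point of the sequence of negative parts `((-x n) ⊔ 0)`. -/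
theorem negPart_mem_WClusterSet
    {L : Type*} [AddCommGroup L] [Lattice L] [Module ℝ L]
    [CovariantClass L L (· + ·) (· ≤ ·)] [PosSMulMono ℝ L]
    [TopologicalSpace L] [IsTopologicalAddGroup L] [ContinuousSMul ℝ L]
    (hsolid : ∀ U ∈ 𝓝 (0 : L), ∃ W ∈ 𝓝 (0 : L), W ⊆ U ∧ IsSolidSet W)
    {I : Set (Set ℕ)} (hI : IsAdmissibleIdeal I)
    {t : ℕ → ℝ} (ht : ∃ δ : ℝ, 0 < δ ∧ ∀ n, δ < t n)
    (x : ℕ → L) (c : L) (hc : c ∈ WClusterSet I t x) :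
    (-c ⊔ 0) ∈ WClusterSet I t (fun n => -(x n) ⊔ 0) := by
  intro U hU
  obtain ⟨W, hW, hWU, hWsolid⟩ := hsolid U hU
  obtain ⟨δ, hδ, htδ⟩ := ht
  intro hcon
  apply hc W hW
  apply hI.2.1 _ _ hcon
  intro n hn
  simp only [Set.mem_setOf_eq] at hn ⊢
  set e := x n - c with he
  set d := (-(x n) ⊔ 0) - (-c ⊔ 0) with hd
  have htn : (0:ℝ) < t n := hδ.trans (htδ n)
  have hde : d ⊔ -d ≤ e ⊔ -e := by
    have h1 : |(-(x n)) ⊔ 0 - (-c) ⊔ 0| ≤ |(-(x n)) - (-c)| := abs_sup_sub_sup_le_abs _ _ _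
    have h2 : (-(x n)) - (-c) = -(x n - c) := by abel
    rw [h2, abs_neg] at h1
    simpa only [abs] using h1
  refine hWU (hWsolid _ _ ?_ hn)
  calc (t n • d) ⊔ -(t n • d) = (t n • d) ⊔ (t n • (-d)) := by rw [smul_neg]
    _ = t n • (d ⊔ -d) := (smul_sup_eq htn _ _).symm
    _ ≤ t n • (e ⊔ -e) := smul_le_smul_of_nonneg_left hde htn.le
    _ = (t n • e) ⊔ (t n • (-e)) := smul_sup_eq htn _ _
    _ = (t n • e) ⊔ -(t n • e) := by rw [smul_neg]
end

section
/- Let (L, τ) be a Hausdorff locally solid Riesz space, I an admissible ideal on ℕ, (t_n) a weighted sequence of real numbers, and x = (x_n) a sequence in L. Let V be a solid τ-neighborhood of zero such that V + U is again a solid τ-neighborhood of zero for every solid τ-neighborhood U of zero. If x* ∈ WI_τ-LIM^V x and c is a weighted I_τ-cluster point of x, then (inf_{n∈ℕ} t_n) · (x* − c) ∈ closure(V); equivalently x* − c lies in (1/inf_n t_n) · closure(V). -/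
open Topology Filter Set Pointwise

/-- In a Hausdorff locally solid Riesz space, if `V` is a solid neighborhood
of zero such that `V + U` is a solid neighborhood of zero for every solid neighborhood `U`
of zero, `x*` is a rough weighted `I`-τ-limit point of `x` with roughness `V` and `c` is a
weighted `I`-τ-cluster point of `x`, then `(⨅ n, t n) • (x* - c) ∈ closure V`. -/
theorem WLimSet_sub_cluster_mem_closure
    {L : Type*} [AddCommGroup L] [Lattice L] [Module ℝ L]
    [CovariantClass L L (· + ·) (· ≤ ·)] [PosSMulMono ℝ L]
    [TopologicalSpace L] [IsTopologicalAddGroup L] [ContinuousSMul ℝ L] [T2Space L]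
    (hsolid : ∀ U ∈ 𝓝 (0 : L), ∃ W ∈ 𝓝 (0 : L), W ⊆ U ∧ IsSolidSet W)
    {I : Set (Set ℕ)} (hI : IsAdmissibleIdeal I)
    {t : ℕ → ℝ} (ht : ∃ δ : ℝ, 0 < δ ∧ ∀ n, δ < t n)
    (x : ℕ → L) {V : Set L} (hV : V ∈ 𝓝 (0 : L)) (hVsolid : IsSolidSet V)
    (hVU : ∀ U ∈ 𝓝 (0 : L), IsSolidSet U → (V + U ∈ 𝓝 (0 : L) ∧ IsSolidSet (V + U)))
    {xs c : L} (hxs : xs ∈ WLimSet I t x V) (hc : c ∈ WClusterSet I t x) :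
    (⨅ n : ℕ, t n) • (xs - c) ∈ closure V := by
  classical
  obtain ⟨δ, hδ, hδt⟩ := ht
  have hbdd : BddBelow (Set.range t) := ⟨δ, fun y ⟨n, hn⟩ => hn ▸ (hδt n).le⟩
  set T : ℝ := ⨅ n : ℕ, t n with hTdef
  have hTδ : δ ≤ T := le_ciInf fun n => (hδt n).le
  have hT : 0 < T := hδ.trans_le hTδ
  have hTle : ∀ n, T ≤ t n := fun n => ciInf_le hbdd n
  set z : L := T • (xs - c) with hz
  -- solid sets are symmetric
  have hsymm : ∀ S : Set L, IsSolidSet S → ∀ y ∈ S, -y ∈ S := by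
    intro S hS y hy
    refine hS (-y) y ?_ hy
    rw [neg_neg, sup_comm]
  -- smul by positive scalar commutes with abs
  have habs_smul : ∀ (s : ℝ), 0 < s → ∀ q : L, (s • q) ⊔ -(s • q) = s • (q ⊔ -q) := by
    intro s hs q
    rw [← smul_neg]
    exact ((OrderIso.smulRight (β := L) hs).map_sup q (-q)).symm
  -- key step: z lies in V + U for every neighborhood U of 0
  have key : ∀ U ∈ 𝓝 (0 : L), ∃ v ∈ V, ∃ w ∈ U, z = v + w := by
    intro U hU
    obtain ⟨W, hW, hWU, hWsolid⟩ := hsolid U hU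
    obtain ⟨W0, hW0, hW0add⟩ := exists_nhds_zero_half hW
    obtain ⟨W1, hW1, hW1sub, hW1solid⟩ := hsolid W0 hW0
    have hA : {n : ℕ | t n • (x n - xs) ∉ V + W1} ∈ I := hxs W1 hW1
    have hB : {n : ℕ | t n • (x n - c) ∈ W1} ∉ I := hc W1 hW1
    have hnot : ¬ ({n : ℕ | t n • (x n - c) ∈ W1} ⊆
        {n : ℕ | t n • (x n - xs) ∉ V + W1}) := by
      intro hsub
      exact hB (hI.2.1 _ _ hA hsub)
    obtain ⟨n, hn1, hn2⟩ := Set.not_subset.1 hnot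
    simp only [Set.mem_setOf_eq, not_not] at hn1 hn2
    obtain ⟨v, hv, w2, hw2, hvw⟩ := hn2
    -- t n • (xs - c) ∈ V + W
    have htn : t n • (xs - c) ∈ V + W := by
      have hvw' : v + w2 = t n • (x n - xs) := hvw
      have heq : t n • (xs - c) = (-v) + (t n • (x n - c) + -w2) := by
        calc t n • (xs - c) = t n • ((x n - c) - (x n - xs)) := by
              congr 1; abel
          _ = t n • (x n - c) - t n • (x n - xs) := smul_sub _ _ _
          _ = (-v) + (t n • (x n - c) + -w2) := by rw [← hvw']; abel
      have hmem : t n • (x n - c) + -w2 ∈ W := by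
        apply hW0add _ (hW1sub hn1) _ (hW1sub (hsymm _ hW1solid _ hw2))
      exact heq ▸ Set.add_mem_add (hsymm _ hVsolid v hv) hmem
    -- pass from t n to T using solidity of V + W
    obtain ⟨hVW, hVWsolid⟩ := hVU W hW hWsolid
    have htn0 : (0 : ℝ) < t n := hδ.trans (hδt n)
    have hs1 : T / t n ≤ 1 := (div_le_one htn0).2 (hTle n)
    have hs0 : (0 : ℝ) < T / t n := div_pos hT htn0
    have hzeq : z = (T / t n) • (t n • (xs - c)) := by
      rw [hz, smul_smul, div_mul_cancel₀ _ htn0.ne']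
    have habs : z ⊔ -z ≤ (t n • (xs - c)) ⊔ -(t n • (xs - c)) := by
      set q : L := t n • (xs - c) with hq
      rw [hzeq, habs_smul _ hs0]
      have hnn : (0 : L) ≤ q ⊔ -q := abs_nonneg q
      have h2 : (0 : L) ≤ (1 - T / t n) • (q ⊔ -q) := smul_nonneg (by linarith) hnn
      have h3 : q ⊔ -q - (T / t n) • (q ⊔ -q) = (1 - T / t n) • (q ⊔ -q) := by
        rw [sub_smul, one_smul]
      exact sub_nonneg.mp (h3 ▸ h2)
    have hzVW : z ∈ V + W := hVWsolid z (t n • (xs - c)) habs htn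
    obtain ⟨v2, hv2, w3, hw3, hzw⟩ := hzVW
    exact ⟨v2, hv2, w3, hWU hw3, hzw.symm⟩
  -- conclude: z ∈ closure V
  rw [mem_closure_iff_nhds]
  intro N hN
  have hU : (fun u : L => z + u) ⁻¹' N ∈ 𝓝 (0 : L) := by
    have hten : Filter.Tendsto (fun u : L => z + u) (𝓝 0) (𝓝 z) := by
      simpa using (continuous_add_left z).tendsto (0 : L)
    exact hten hN
  obtain ⟨W, hW, hWU, hWsolid⟩ := hsolid _ hU
  obtain ⟨v, hv, w, hw, hzw⟩ := key W hW
  refine ⟨v, ?_, hv⟩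
  have : z + (-w) = v := by rw [hzw]; abel
  have hmem : -w ∈ (fun u : L => z + u) ⁻¹' N := hWU (hsymm _ hWsolid w hw)
  simpa [this] using hmem
end

section
/- Let (L, τ) be a Hausdorff locally solid Riesz space, I an admissible ideal on ℕ, (t_n) a weighted sequence of real numbers, and x = (x_n) a sequence in L. Let V be a τ-bounded solid τ-neighborhood of zero such that both V + U and V + V + U are solid τ-neighborhoods of zero for every solid τ-neighborhood U of zero. If the rough weighted I_τ-limit set WI_τ-LIM^V x is nonempty, then the weighted I_τ-cluster point set W_IΓ_x^τ is a τ-bounded subset of L. -/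
open Topology Filter Set Pointwise

lemma aux_abs_smul_le {L : Type*} [AddCommGroup L] [Lattice L] [Module ℝ L]
    [CovariantClass L L (· + ·) (· ≤ ·)] [PosSMulMono ℝ L]
    {r : ℝ} (hr0 : 0 ≤ r) (hr1 : r ≤ 1) (z : L) :
    (r • z) ⊔ (-(r • z)) ≤ z ⊔ (-z) := by
  have habs : (0:L) ≤ z ⊔ -z := abs_nonneg z
  have h1 : r • z ≤ r • (z ⊔ -z) := smul_le_smul_of_nonneg_left le_sup_left hr0
  have h2 : -(r • z) ≤ r • (z ⊔ -z) := by
    rw [← smul_neg]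
    exact smul_le_smul_of_nonneg_left le_sup_right hr0
  have h3 : r • (z ⊔ -z) ≤ z ⊔ -z := by
    have h4 : (0:L) ≤ (1 - r) • (z ⊔ -z) := smul_nonneg (by linarith) habs
    calc r • (z ⊔ -z) ≤ r • (z ⊔ -z) + (1 - r) • (z ⊔ -z) := le_add_of_nonneg_right h4
      _ = z ⊔ -z := by rw [← add_smul]; simp
  exact sup_le (h1.trans h3) (h2.trans h3)

/-- In a Hausdorff locally solid Riesz space, let `V` be a τ-bounded solid
neighborhood of zero such that `V + U` and `V + V + U` are solid neighborhoods of zero for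
every solid neighborhood `U` of zero. If the rough weighted `I`-τ-limit set of `x` with
roughness `V` is nonempty, then the weighted `I`-τ-cluster point set of `x` is τ-bounded. -/
theorem WClusterSet_tauBounded
    {L : Type*} [AddCommGroup L] [Lattice L] [Module ℝ L]
    [CovariantClass L L (· + ·) (· ≤ ·)] [PosSMulMono ℝ L]
    [TopologicalSpace L] [IsTopologicalAddGroup L] [ContinuousSMul ℝ L] [T2Space L]
    (hsolid : ∀ U ∈ 𝓝 (0 : L), ∃ W ∈ 𝓝 (0 : L), W ⊆ U ∧ IsSolidSet W)
    {I : Set (Set ℕ)} (hI : IsAdmissibleIdeal I)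
    {t : ℕ → ℝ} (ht : ∃ δ : ℝ, 0 < δ ∧ ∀ n, δ < t n)
    (x : ℕ → L) {V : Set L} (hV : V ∈ 𝓝 (0 : L)) (hVsolid : IsSolidSet V)
    (hVbdd : ∀ U ∈ 𝓝 (0 : L), ∃ lam : ℝ, 0 < lam ∧ V ⊆ lam • U)
    (hVU : ∀ U ∈ 𝓝 (0 : L), IsSolidSet U → (V + U ∈ 𝓝 (0 : L) ∧ IsSolidSet (V + U)))
    (hVVU : ∀ U ∈ 𝓝 (0 : L), IsSolidSet U →
      (V + V + U ∈ 𝓝 (0 : L) ∧ IsSolidSet (V + V + U)))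
    (hne : (WLimSet I t x V).Nonempty) :
    ∀ U ∈ 𝓝 (0 : L), ∃ lam : ℝ, 0 < lam ∧ WClusterSet I t x ⊆ lam • U := by
  obtain ⟨δ, hδ, hδt⟩ := ht
  obtain ⟨x', hx'⟩ := hne
  have key : ∀ U₀ ∈ 𝓝 (0:L), IsSolidSet U₀ → ∀ c ∈ WClusterSet I t x,
      δ • (c - x') ∈ V + U₀ := by
    intro U₀ hU₀ hU₀solid c hc
    obtain ⟨W₁, hW₁, hW₁half⟩ := exists_nhds_zero_half hU₀
    obtain ⟨W, hW, hWsub, hWsolid⟩ := hsolid W₁ hW₁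
    have hA : {n | t n • (x n - x') ∉ V + W} ∈ I := hx' W hW
    have hB : {n | t n • (x n - c) ∈ W} ∉ I := hc W hW
    have hsubn : ¬ ({n | t n • (x n - c) ∈ W} ⊆ {n | t n • (x n - x') ∉ V + W}) :=
      fun h => hB (hI.2.1 _ _ hA h)
    rw [Set.not_subset] at hsubn
    obtain ⟨n, hnB, hnA⟩ := hsubn
    simp only [mem_setOf_eq, not_not] at hnB hnA
    obtain ⟨v, hv, w, hw, hvw⟩ := hnA
    have hnegw : -(t n • (x n - c)) ∈ W := by
      refine hWsolid _ _ ?_ hnB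
      rw [neg_neg, sup_comm]
    have hsum : t n • (c - x') ∈ V + U₀ := by
      have heq : t n • (c - x') = v + (w + -(t n • (x n - c))) := by
        have h5 : t n • (c - x') = t n • (x n - x') - t n • (x n - c) := by
          rw [← smul_sub]
          congr 1
          abel
        rw [h5, ← (show v + w = t n • (x n - x') from hvw)]
        abel
      rw [heq]
      exact Set.add_mem_add hv (hW₁half _ (hWsub hw) _ (hWsub hnegw))
    have htn : 0 < t n := hδ.trans (hδt n)
    have hr0 : 0 ≤ δ / t n := by positivity
    have hr1 : δ / t n ≤ 1 := by rw [div_le_one htn]; exact (hδt n).le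
    have hzz : δ • (c - x') = (δ / t n) • (t n • (c - x')) := by
      rw [smul_smul, div_mul_cancel₀ _ htn.ne']
    have hle := aux_abs_smul_le hr0 hr1 (t n • (c - x'))
    rw [← hzz] at hle
    exact (hVU U₀ hU₀ hU₀solid).2 _ _ hle hsum
  intro U hU
  obtain ⟨Wb, ⟨hWb, hWbBal⟩, hWbU⟩ := (nhds_basis_balanced ℝ L).mem_iff.mp hU
  obtain ⟨W₂, hW₂, hW₂half⟩ := exists_nhds_zero_half hWb
  obtain ⟨W₃, hW₃, hW₃half⟩ := exists_nhds_zero_half hW₂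
  obtain ⟨W₁, ⟨hW₁, hW₁bal⟩, hW₁sub⟩ :=
    (nhds_basis_balanced ℝ L).mem_iff.mp (inter_mem hW₂ hW₃)
  have hW₁₂ : W₁ ⊆ W₂ := fun y hy => (hW₁sub hy).1
  have hW₁₃ : W₁ ⊆ W₃ := fun y hy => (hW₁sub hy).2
  have htriple : ∀ a ∈ W₁, ∀ b ∈ W₁, ∀ d ∈ W₁, a + b + d ∈ Wb := by
    intro a ha b hb d hd
    have h1 : b + d ∈ W₂ := hW₃half _ (hW₁₃ hb) _ (hW₁₃ hd)
    have h2 := hW₂half _ (hW₁₂ ha) _ h1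
    rwa [← add_assoc] at h2
  have hδW : δ • W₁ ∈ 𝓝 (0:L) := (set_smul_mem_nhds_zero_iff hδ.ne').mpr hW₁
  obtain ⟨U₀, hU₀, hU₀sub, hU₀solid⟩ := hsolid (δ • W₁) hδW
  obtain ⟨μ, hμ, hVsub⟩ := hVbdd W₁ hW₁
  obtain ⟨ρ, hρ, hρx⟩ := (absorbent_nhds_zero (𝕜 := ℝ) hW₁ x').exists_pos
  set lam : ℝ := max (max ρ 1) (μ / δ) with hlamdef
  have hlam1 : (1:ℝ) ≤ lam := le_max_of_le_left (le_max_right _ _)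
  have hlampos : (0:ℝ) < lam := lt_of_lt_of_le one_pos hlam1
  have hnormlam : ‖lam‖ = lam := Real.norm_of_nonneg hlampos.le
  refine ⟨lam, hlampos, ?_⟩
  intro c hc
  obtain ⟨v, hv, u, hu, hvu⟩ := key U₀ hU₀ hU₀solid c hc
  have hvu' : v + u = δ • (c - x') := hvu
  have h1 : c - x' = δ⁻¹ • v + δ⁻¹ • u := by
    rw [← smul_add, hvu', smul_smul, inv_mul_cancel₀ hδ.ne', one_smul]
  have hc_eq : c = x' + δ⁻¹ • v + δ⁻¹ • u := by
    have := eq_add_of_sub_eq h1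
    rw [this]; abel
  have hx'mem : x' ∈ lam • W₁ := by
    have hx'ρ : x' ∈ ρ • W₁ := hρx ρ (le_of_eq (Real.norm_of_nonneg hρ.le).symm) rfl
    refine hW₁bal.smul_mono ?_ hx'ρ
    rw [hnormlam, Real.norm_of_nonneg hρ.le]
    exact le_max_of_le_left (le_max_left _ _)
  have hvmem : δ⁻¹ • v ∈ lam • W₁ := by
    obtain ⟨w, hw, rfl⟩ := hVsub hv
    rw [smul_smul, ← div_eq_inv_mul]
    refine hW₁bal.smul_mono ?_ ⟨w, hw, rfl⟩
    rw [hnormlam, Real.norm_of_nonneg (by positivity)]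
    exact le_max_right _ _
  have humem : δ⁻¹ • u ∈ lam • W₁ := by
    obtain ⟨w, hw, rfl⟩ := hU₀sub hu
    rw [inv_smul_smul₀ hδ.ne']
    refine hW₁bal.smul_mono (a := (1:ℝ)) ?_ ⟨w, hw, one_smul _ _⟩
    rw [hnormlam, norm_one]
    exact hlam1
  obtain ⟨w₁, hw₁, hw₁e⟩ := hx'mem
  obtain ⟨w₂, hw₂, hw₂e⟩ := hvmem
  obtain ⟨w₃, hw₃, hw₃e⟩ := humem
  have hw₁e' : lam • w₁ = x' := hw₁e
  have hw₂e' : lam • w₂ = δ⁻¹ • v := hw₂e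
  have hw₃e' : lam • w₃ = δ⁻¹ • u := hw₃e
  refine ⟨w₁ + w₂ + w₃, hWbU (htriple _ hw₁ _ hw₂ _ hw₃), ?_⟩
  show lam • (w₁ + w₂ + w₃) = c
  rw [smul_add, smul_add, hw₁e', hw₂e', hw₃e', hc_eq]
end

section
/- Work in ℝ² with the max norm ‖(ξ,η)‖ = max(|ξ|,|η|), coordinatewise order, and the norm topology, and let I_d be the ideal of subsets of ℕ of natural density zero. Define t_n = n for all n ≥ 1, x_n = (1,0) if n is not a perfect square and x_n = (n,n) if n is a perfect square, and V = {(ξ,η) ∈ ℝ² : ‖(ξ,η)‖ ≤ 1} ∪ {(ξ,η) ∈ ℝ² : ξ = η}. Then the rough weighted I_τ-limit set of x with degree of roughness V equals the line {(ξ,η) ∈ ℝ² : ξ − η = 1}. (This set is convex although V is not convex.) -/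
open Topology Filter Set Pointwise

/-- The ideal of subsets of ℕ of natural density zero. -/
def densityZeroIdeal : Set (Set ℕ) :=
  {A | Tendsto (fun n : ℕ => ((A ∩ Set.Icc 1 n).ncard : ℝ) / n) atTop (𝓝 0)}

/-- The sequence of Example 1: `x n = (n, n)` if `n` is a perfect square,
`x n = (1, 0)` otherwise. -/
noncomputable def xSeq13 : ℕ → ℝ × ℝ := fun n =>
  if IsSquare n then ((n : ℝ), (n : ℝ)) else (1, 0)

/-- The degree of roughness of Example 1: the closed unit ball for the max norm together
with the diagonal. -/
def V13 : Set (ℝ × ℝ) := {p | ‖p‖ ≤ 1} ∪ {p | p.1 = p.2}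

lemma ncard_Icc_nat (a b : ℕ) : (Set.Icc a b).ncard = b + 1 - a := by
  rw [Set.ncard_eq_toFinset_card']; simp

lemma ncard_Iio_nat (n : ℕ) : (Set.Iio n).ncard = n := by
  rw [Set.ncard_eq_toFinset_card']; simp

lemma squares_count (n : ℕ) : ({k | IsSquare k} ∩ Set.Icc 1 n).ncard ≤ Nat.sqrt n := by
  have h : ({k | IsSquare k} ∩ Set.Icc 1 n).ncard ≤ (Set.Icc 1 (Nat.sqrt n)).ncard := by
    apply Set.ncard_le_ncard_of_injOn Nat.sqrt
    · rintro k ⟨⟨m, rfl⟩, hk1, hk2⟩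
      have h1 : 1 ≤ m := by
        by_contra h
        push_neg at h
        interval_cases m; simp_all
      rw [Nat.sqrt_eq]
      exact ⟨h1, Nat.le_sqrt.2 hk2⟩
    · rintro k ⟨⟨m, rfl⟩, -⟩ k' ⟨⟨m', rfl⟩, -⟩ h
      rw [Nat.sqrt_eq, Nat.sqrt_eq] at h
      rw [h]
  calc _ ≤ (Set.Icc 1 (Nat.sqrt n)).ncard := h
    _ = Nat.sqrt n := by rw [_root_.ncard_Icc_nat]; omega

lemma sqrt_cast_le (n : ℕ) : (Nat.sqrt n : ℝ) ≤ Real.sqrt n := by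
  rw [Real.le_sqrt (by positivity) (by positivity), ← Nat.cast_pow]
  exact_mod_cast Nat.sqrt_le' n

lemma tendsto_sqrt_div : Tendsto (fun n : ℕ => (Nat.sqrt n : ℝ) / n) atTop (𝓝 0) := by
  have hsq : Tendsto (fun n : ℕ => Real.sqrt n) atTop atTop := by
    rw [tendsto_atTop_atTop]
    intro b
    refine ⟨⌈max b 0⌉₊ ^ 2, fun a ha => ?_⟩
    have h1 : ((⌈max b 0⌉₊ : ℝ)) ^ 2 ≤ (a : ℝ) := by exact_mod_cast ha
    have h2 : Real.sqrt (((⌈max b 0⌉₊ : ℝ)) ^ 2) ≤ Real.sqrt a := Real.sqrt_le_sqrt h1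
    rw [Real.sqrt_sq (by positivity)] at h2
    have h3 : max b 0 ≤ ((⌈max b 0⌉₊ : ℝ)) := Nat.le_ceil _
    have h4 : b ≤ max b 0 := le_max_left _ _
    linarith
  have hinv : Tendsto (fun n : ℕ => (Real.sqrt n)⁻¹) atTop (𝓝 0) := hsq.inv_tendsto_atTop
  apply squeeze_zero' (g := fun n : ℕ => (Real.sqrt n)⁻¹)
  · filter_upwards with n; positivity
  · filter_upwards [eventually_ge_atTop 1] with n hn
    have hn1 : (1 : ℝ) ≤ n := by exact_mod_cast hn
    have h1 : Real.sqrt n / n ≤ (Real.sqrt n)⁻¹ := by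
      rw [div_le_iff₀ (by linarith), inv_mul_eq_div, le_div_iff₀ (by positivity),
        Real.mul_self_sqrt (by positivity)]
    calc (Nat.sqrt n : ℝ) / n ≤ Real.sqrt n / n :=
          div_le_div_of_nonneg_right (sqrt_cast_le n) (by linarith) |>.trans_eq rfl
      _ ≤ (Real.sqrt n)⁻¹ := h1
  · exact hinv

lemma ideal_mono {A B : Set ℕ} (hAB : A ⊆ B) (hB : B ∈ densityZeroIdeal) :
    A ∈ densityZeroIdeal := by
  apply squeeze_zero' (g := fun n : ℕ => ((B ∩ Set.Icc 1 n).ncard : ℝ) / n)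
  · filter_upwards with n; positivity
  · filter_upwards with n
    apply div_le_div_of_nonneg_right ?_ (by positivity)
    exact_mod_cast Set.ncard_le_ncard (Set.inter_subset_inter_left _ hAB)
      ((Set.finite_Icc 1 n).inter_of_right _)
  · exact hB

lemma squares_mem : {k | IsSquare k} ∈ densityZeroIdeal := by
  apply squeeze_zero' (g := fun n : ℕ => (Nat.sqrt n : ℝ) / n)
  · filter_upwards with n; positivity
  · filter_upwards with n
    gcongr
    exact_mod_cast squares_count n
  · exact tendsto_sqrt_div

lemma nonsquares_not_mem (N : ℕ) : {k | N ≤ k ∧ ¬ IsSquare k} ∉ densityZeroIdeal := by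
  intro hmem
  set S := {k | N ≤ k ∧ ¬ IsSquare k}
  have hcount : ∀ n : ℕ, (n : ℝ) ≤ ((S ∩ Set.Icc 1 n).ncard : ℝ) + N + Nat.sqrt n := by
    intro n
    have hcover : Set.Icc 1 n ⊆ (S ∩ Set.Icc 1 n) ∪ Set.Iio N ∪ ({k | IsSquare k} ∩ Set.Icc 1 n) := by
      intro k hk
      by_cases h1 : N ≤ k
      · by_cases h2 : IsSquare k
        · exact Or.inr ⟨h2, hk⟩
        · exact Or.inl (Or.inl ⟨⟨h1, h2⟩, hk⟩)
      · exact Or.inl (Or.inr (by simpa using Nat.lt_of_not_le h1))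
    have h1 : n ≤ (S ∩ Set.Icc 1 n).ncard + N + Nat.sqrt n := by
      have := Set.ncard_le_ncard hcover (by
        apply Set.Finite.union
        apply Set.Finite.union
        · exact (Set.finite_Icc 1 n).inter_of_right _
        · exact Set.finite_Iio N
        · exact (Set.finite_Icc 1 n).inter_of_right _)
      rw [_root_.ncard_Icc_nat] at this
      calc n = n + 1 - 1 := by omega
        _ ≤ _ := this.trans (by
            calc _ ≤ ((S ∩ Set.Icc 1 n) ∪ Set.Iio N).ncard + ({k | IsSquare k} ∩ Set.Icc 1 n).ncard :=
                  Set.ncard_union_le _ _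
              _ ≤ (S ∩ Set.Icc 1 n).ncard + (Set.Iio N).ncard + ({k | IsSquare k} ∩ Set.Icc 1 n).ncard := by
                  gcongr; exact Set.ncard_union_le _ _
              _ ≤ (S ∩ Set.Icc 1 n).ncard + N + Nat.sqrt n := by
                  rw [_root_.ncard_Iio_nat]; gcongr; exact squares_count n)
    exact_mod_cast h1
  have hlow : Tendsto (fun n : ℕ => 1 - (N : ℝ) / n - (Nat.sqrt n : ℝ) / n) atTop (𝓝 1) := by
    have h1 : Tendsto (fun n : ℕ => (N : ℝ) / n) atTop (𝓝 0) :=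
      tendsto_const_div_atTop_nhds_zero_nat (N : ℝ)
    have := (tendsto_const_nhds (x := (1:ℝ))).sub h1 |>.sub tendsto_sqrt_div
    simpa using this
  have hle : (1 : ℝ) ≤ 0 := by
    apply le_of_tendsto_of_tendsto hlow hmem
    filter_upwards [eventually_ge_atTop 1] with n hn
    have hn1 : (1 : ℝ) ≤ n := by exact_mod_cast hn
    have hc := hcount n
    have hpos : (0:ℝ) < n := by linarith
    have heq : 1 - (N : ℝ) / n - (Nat.sqrt n : ℝ) / n = ((n : ℝ) - N - Nat.sqrt n) / n := by
      field_simp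
    rw [heq]
    apply div_le_div_of_nonneg_right (by linarith) (by linarith)
  linarith

set_option maxHeartbeats 1600000 in
/-- In ℝ² with the max norm and coordinatewise order, with the density-zero
ideal, weights `t n = n` and the sequence and roughness set above, the rough weighted
`I`-τ-limit set equals the line `{(ξ, η) : ξ - η = 1}`; this set is convex although `V13`
is not convex. -/
theorem wLimSet_eq_line_example1 :
    {xs : ℝ × ℝ | ∀ U ∈ 𝓝 (0 : ℝ × ℝ),
        {n : ℕ | (n : ℝ) • (xSeq13 n - xs) ∉ V13 + U} ∈ densityZeroIdeal}
      = {p : ℝ × ℝ | p.1 - p.2 = 1} ∧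
    Convex ℝ {p : ℝ × ℝ | p.1 - p.2 = 1} ∧ ¬ Convex ℝ V13 := by

  refine ⟨?_, ?_, ?_⟩
  · ext xs
    simp only [Set.mem_setOf_eq]
    constructor
    · intro h
      by_contra hne
      have hd : (1 - xs.1) - (0 - xs.2) ≠ 0 := by
        intro h0; apply hne; linarith
      obtain ⟨d, hdef⟩ : ∃ d : ℝ, (1 - xs.1) - (0 - xs.2) = d := ⟨_, rfl⟩
      rw [hdef] at hd
      have hdpos : 0 < |d| := abs_pos.2 hd
      obtain ⟨ε, hε⟩ : ∃ ε : ℝ, |d| / 4 = ε := ⟨_, rfl⟩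
      have hεpos : 0 < ε := by rw [← hε]; positivity
      obtain ⟨N₀, hN₀⟩ := exists_nat_gt ((1 + ε) * 2 / |d|)
      obtain ⟨N, hN⟩ : ∃ N : ℕ, max N₀ 1 = N := ⟨_, rfl⟩
      have hNd : (1 + ε) * 2 / |d| < N := lt_of_lt_of_le hN₀ (by exact_mod_cast hN ▸ le_max_left N₀ 1)
      have hN1 : (1 : ℕ) ≤ N := hN ▸ le_max_right N₀ 1
      have hball : Metric.ball (0 : ℝ × ℝ) ε ∈ 𝓝 (0 : ℝ × ℝ) := Metric.ball_mem_nhds _ hεpos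
      have hmem := h (Metric.ball 0 ε) hball
      have hsub : {k | N ≤ k ∧ ¬ IsSquare k} ⊆
          {n : ℕ | (n : ℝ) • (xSeq13 n - xs) ∉ V13 + Metric.ball 0 ε} := by
        rintro k ⟨hkN, hks⟩
        simp only [Set.mem_setOf_eq]
        intro hk
        rw [Set.mem_add] at hk
        obtain ⟨v, hv, u, hu, heq⟩ := hk
        have hkR : (N : ℝ) ≤ k := by exact_mod_cast hkN
        have hk1 : (1 : ℝ) ≤ k := by
          have : (1 : ℝ) ≤ N := by exact_mod_cast hN1
          linarith
        have hx : xSeq13 k = (1, 0) := if_neg hks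
        have hc1 : ((k : ℝ) • (xSeq13 k - xs)).1 = k * (1 - xs.1) := by
          rw [hx]; simp [Prod.smul_def]
        have hc2 : ((k : ℝ) • (xSeq13 k - xs)).2 = k * (0 - xs.2) := by
          rw [hx]; simp [Prod.smul_def]
        have hdiff : ((k : ℝ) • (xSeq13 k - xs)).1 - ((k : ℝ) • (xSeq13 k - xs)).2 = k * d := by
          rw [hc1, hc2, ← hdef]; ring
        have hueq : u = (k : ℝ) • (xSeq13 k - xs) - v := by rw [← heq]; ring
        have hunorm : ‖u‖ < ε := by simpa using hu
        have hu1 : |u.1| < ε := by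
          have h' := (le_max_left ‖u.1‖ ‖u.2‖).trans_lt (by rwa [Prod.norm_def] at hunorm)
          rwa [Real.norm_eq_abs] at h'
        have hu2 : |u.2| < ε := by
          have h' := (le_max_right ‖u.1‖ ‖u.2‖).trans_lt (by rwa [Prod.norm_def] at hunorm)
          rwa [Real.norm_eq_abs] at h'
        have e1 : ((k : ℝ) • (xSeq13 k - xs)).1 = v.1 + u.1 := by rw [← heq]; rfl
        have e2 : ((k : ℝ) • (xSeq13 k - xs)).2 = v.2 + u.2 := by rw [← heq]; rfl
        have key : (k : ℝ) * d = (v.1 - v.2) + (u.1 - u.2) := by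
          rw [← hdiff, e1, e2]; ring
        have hNd' : (1 + ε) * 2 < (N : ℝ) * |d| := by
          rw [div_lt_iff₀ hdpos] at hNd; linarith
        have hkd : (1 + ε) * 2 < (k : ℝ) * |d| := by nlinarith
        rcases hv with hv1 | hv1
        · simp only [Set.mem_setOf_eq] at hv1
          rw [Prod.norm_def, max_le_iff, Real.norm_eq_abs, Real.norm_eq_abs] at hv1
          obtain ⟨hva, hvb⟩ := hv1
          have hva' := abs_le.1 hva
          have hvb' := abs_le.1 hvb
          have hu1' := abs_le.1 hu1.le
          have hu2' := abs_le.1 hu2.le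
          rcases abs_cases d with ⟨hda, -⟩ | ⟨hda, -⟩ <;> rw [hda] at hkd <;> nlinarith
        · simp only [Set.mem_setOf_eq] at hv1
          have key2 : (k : ℝ) * d = u.1 - u.2 := by rw [key, hv1]; ring
          have hu1' := abs_le.1 hu1.le
          have hu2' := abs_le.1 hu2.le
          have hε4 : |d| = 4 * ε := by rw [← hε]; ring
          rcases abs_cases d with ⟨hda, -⟩ | ⟨hda, -⟩ <;> rw [hda] at hε4 <;> nlinarith
      exact nonsquares_not_mem N (ideal_mono hsub hmem)
    · intro hxs U hU
      apply ideal_mono _ squares_mem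
      intro n hn
      simp only [Set.mem_setOf_eq] at hn ⊢
      by_contra hns
      apply hn
      have hx : xSeq13 n = (1, 0) := if_neg hns
      have hv : (n : ℝ) • (xSeq13 n - xs) ∈ V13 := by
        right
        rw [hx]
        simp only [Set.mem_setOf_eq, Prod.smul_fst, Prod.smul_snd, Prod.fst_sub, Prod.snd_sub,
          smul_eq_mul]
        have : 1 - xs.1 = 0 - xs.2 := by linarith [hxs]
        rw [this]
      have h0 : (0 : ℝ × ℝ) ∈ U := mem_of_mem_nhds hU
      have := Set.add_mem_add hv h0
      rwa [add_zero] at this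
  · rintro p hp q hq a b ha hb hab
    simp only [Set.mem_setOf_eq] at hp hq ⊢
    simp only [Prod.fst_add, Prod.snd_add, Prod.smul_fst, Prod.smul_snd, smul_eq_mul]
    nlinarith [hp, hq, hab]
  · intro h
    have h1 : ((1 : ℝ), (0 : ℝ)) ∈ V13 := by
      left
      simp [V13, Prod.norm_def, Real.norm_eq_abs]
    have h2 : ((2 : ℝ), (2 : ℝ)) ∈ V13 := Or.inr rfl
    have hm := h h1 h2 (by norm_num : (0:ℝ) ≤ 1/2) (by norm_num : (0:ℝ) ≤ 1/2) (by norm_num)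
    have : ((1:ℝ)/2) • ((1 : ℝ), (0 : ℝ)) + ((1:ℝ)/2) • ((2 : ℝ), (2 : ℝ)) = ((3/2 : ℝ), (1 : ℝ)) := by
      simp [Prod.smul_def, Prod.ext_iff]; norm_num
    rw [this] at hm
    rcases hm with hm | hm
    · simp only [Set.mem_setOf_eq, Prod.norm_def, Real.norm_eq_abs] at hm
      rw [abs_of_pos (by norm_num), abs_of_pos (by norm_num)] at hm
      have : (3/2 : ℝ) ≤ 1 := le_trans (le_max_left _ _) hm
      linarith
    · simp only [Set.mem_setOf_eq] at hm
      norm_num at hm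
end

section
/- Work in ℝ² with the Euclidean norm, coordinatewise order, and the norm topology, and let I_s = {A ⊆ ℕ : Σ_{a∈A} 1/a < ∞} be the summability ideal. Define t_n = n for all n ≥ 1, x_n = ((−1)ⁿ, 0) if n is not a perfect power (i.e., n ≠ m^p for all m ∈ ℕ and integers p ≥ 2) and x_n = (n, 0) otherwise, and V = {(ξ,η) ∈ ℝ² : −1 < η < 1}. Then the rough weighted I_τ-limit set of x with degree of roughness V equals the line {(ξ,η) ∈ ℝ² : η = 0}; in particular it is infinite and not von Neumann bounded. -/
open Topology Filter Set Pointwise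

/-- The summability ideal `{A ⊆ ℕ : Σ_{a ∈ A} 1/a < ∞}`. -/
def summabilityIdeal : Set (Set ℕ) :=
  {A | Summable fun a : A => (1 : ℝ) / (a : ℝ)}

open Classical in
/-- The sequence of Example 3: `x n = (n, 0)` if `n` is a perfect power (`n = m ^ p` with
`p ≥ 2`), and `x n = ((-1) ^ n, 0)` otherwise. -/
noncomputable def xSeq14 : ℕ → ℝ × ℝ := fun n =>
  if ∃ m p : ℕ, 2 ≤ p ∧ n = m ^ p then ((n : ℝ), 0) else ((-1 : ℝ) ^ n, 0)

/-- The degree of roughness of Example 3: the open horizontal strip `{(ξ, η) : -1 < η < 1}`. -/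
def V14 : Set (ℝ × ℝ) := {p | -1 < p.2 ∧ p.2 < 1}

lemma xSeq14_snd (n : ℕ) : (xSeq14 n).2 = 0 := by
  unfold xSeq14; split_ifs <;> rfl

lemma tail_not_summable (N : ℕ) :
    ¬ Summable fun a : {n : ℕ | N ≤ n} => (1 : ℝ) / (a : ℝ) := by
  intro h
  have h' : Summable ((fun n : ℕ => (1:ℝ)/(n:ℝ)) ∘ (Subtype.val : {n : ℕ | N ≤ n} → ℕ)) := h
  rw [summable_subtype_iff_indicator] at h'
  have h2 : Summable fun n : ℕ =>
      ({n : ℕ | N ≤ n}.indicator (fun a : ℕ => (1:ℝ)/(a:ℝ))) (n + N) :=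
    (summable_nat_add_iff N).mpr h'
  have h3 : Summable fun n : ℕ => (1:ℝ)/((n + N : ℕ) : ℝ) := by
    refine h2.congr fun n => ?_
    rw [Set.indicator_of_mem]
    exact Nat.le_add_left N n
  have h4 : Summable fun n : ℕ => (1:ℝ)/(n : ℝ) :=
    (summable_nat_add_iff (f := fun n : ℕ => (1:ℝ)/(n:ℝ)) N).mp h3
  exact Real.not_summable_one_div_natCast h4

/-- In ℝ² with the summability ideal, weights `t n = n` and the sequence and
roughness set above, the rough weighted `I`-τ-limit set equals the line `{(ξ, η) : η = 0}`;
in particular it is infinite and not von Neumann bounded. -/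
theorem wLimSet_eq_line_example3 :
    {xs : ℝ × ℝ | ∀ U ∈ 𝓝 (0 : ℝ × ℝ),
        {n : ℕ | (n : ℝ) • (xSeq14 n - xs) ∉ V14 + U} ∈ summabilityIdeal}
      = {p : ℝ × ℝ | p.2 = 0} ∧
    ({p : ℝ × ℝ | p.2 = 0} : Set (ℝ × ℝ)).Infinite ∧
    ¬ (∀ U ∈ 𝓝 (0 : ℝ × ℝ), ∃ lam : ℝ, 0 < lam ∧ {p : ℝ × ℝ | p.2 = 0} ⊆ lam • U) := by
  refine ⟨?_, ?_, ?_⟩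
  · ext xs
    simp only [Set.mem_setOf_eq]
    constructor
    · intro h
      by_contra hxs
      have hpos : 0 < |xs.2| := abs_pos.mpr hxs
      have hU : Metric.ball (0 : ℝ × ℝ) 1 ∈ 𝓝 (0 : ℝ × ℝ) :=
        Metric.ball_mem_nhds _ one_pos
      have hbad := h _ hU
      set N : ℕ := ⌈(2 : ℝ) / |xs.2|⌉₊ with hN
      have hsub : {n : ℕ | N ≤ n} ⊆
          {n : ℕ | (n : ℝ) • (xSeq14 n - xs) ∉ V14 + Metric.ball (0 : ℝ × ℝ) 1} := by
        intro n hn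
        simp only [Set.mem_setOf_eq] at hn ⊢
        intro hmem
        obtain ⟨v, hv, u, hu, huv⟩ := hmem
        have hsnd : ((n : ℝ) • (xSeq14 n - xs)).2 = -((n : ℝ) * xs.2) := by
          simp [Prod.smul_snd, xSeq14_snd]
        have h2 : |((n : ℝ) • (xSeq14 n - xs)).2| < 2 := by
          rw [← huv]
          have hv2 : |v.2| < 1 := abs_lt.mpr ⟨hv.1, hv.2⟩
          have hu2 : |u.2| < 1 := by
            have := norm_snd_le u
            have hnu : ‖u‖ < 1 := by simpa using (Metric.mem_ball.mp hu)
            calc |u.2| = ‖u.2‖ := rfl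
              _ ≤ ‖u‖ := norm_snd_le u
              _ < 1 := hnu
          calc |(v + u).2| = |v.2 + u.2| := rfl
            _ ≤ |v.2| + |u.2| := abs_add_le _ _
            _ < 2 := by linarith
        rw [hsnd, abs_neg, abs_mul] at h2
        have hnge : (2 : ℝ) / |xs.2| ≤ (n : ℝ) :=
          le_trans (Nat.le_ceil _) (by exact_mod_cast hn)
        have hle : (2 : ℝ) ≤ (n : ℝ) * |xs.2| := by
          rw [div_le_iff₀ hpos] at hnge
          exact hnge
        rw [Nat.abs_cast] at h2
        linarith
      -- bad set summable, so tail summable, contradiction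
      have hbads : Summable fun a : {n : ℕ | (n : ℝ) • (xSeq14 n - xs) ∉
          V14 + Metric.ball (0 : ℝ × ℝ) 1} => (1:ℝ)/(a:ℝ) := hbad
      have hbads' : Summable ((fun n : ℕ => (1:ℝ)/(n:ℝ)) ∘
          (Subtype.val : {n : ℕ | (n : ℝ) • (xSeq14 n - xs) ∉
            V14 + Metric.ball (0 : ℝ × ℝ) 1} → ℕ)) := hbads
      rw [summable_subtype_iff_indicator] at hbads'
      replace hbads := hbads'
      have htail : Summable fun a : {n : ℕ | N ≤ n} => (1:ℝ)/(a:ℝ) := by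
        show Summable ((fun n : ℕ => (1:ℝ)/(n:ℝ)) ∘ (Subtype.val : {n : ℕ | N ≤ n} → ℕ))
        rw [summable_subtype_iff_indicator]
        have := hbads.indicator {n : ℕ | N ≤ n}
        rwa [Set.indicator_indicator, Set.inter_eq_left.mpr hsub] at this
      exact tail_not_summable N htail
    · intro hxs U hU
      have : {n : ℕ | (n : ℝ) • (xSeq14 n - xs) ∉ V14 + U} = ∅ := by
        ext n
        simp only [Set.mem_setOf_eq, Set.mem_empty_iff_false, iff_false, not_not]
        have hv : (n : ℝ) • (xSeq14 n - xs) ∈ V14 := by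
          constructor <;> simp [V14, Prod.smul_snd, xSeq14_snd, hxs]
        have := Set.add_mem_add hv (mem_of_mem_nhds hU)
        simpa using this
      rw [this]
      exact summable_empty
  · exact Set.infinite_of_injective_forall_mem
      (f := fun ξ : ℝ => ((ξ, 0) : ℝ × ℝ))
      (fun a b hab => congrArg Prod.fst hab) (fun a => rfl)
  · intro h
    obtain ⟨lam, hlam, hsub⟩ := h (Metric.ball 0 1) (Metric.ball_mem_nhds _ one_pos)
    have hp : ((lam + 1, 0) : ℝ × ℝ) ∈ {p : ℝ × ℝ | p.2 = 0} := rfl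
    obtain ⟨u, hu, huv⟩ := hsub hp
    have h1 : ‖((lam + 1, 0) : ℝ × ℝ)‖ < lam := by
      rw [← huv, norm_smul]
      have : ‖u‖ < 1 := by simpa using Metric.mem_ball.mp hu
      calc ‖lam‖ * ‖u‖ < ‖lam‖ * 1 := by
            apply mul_lt_mul_of_pos_left this
            simpa [abs_of_pos hlam] using hlam
        _ = lam := by simp [abs_of_pos hlam]
    have h2 : lam + 1 ≤ ‖((lam + 1, 0) : ℝ × ℝ)‖ := by
      have := norm_fst_le ((lam + 1, 0) : ℝ × ℝ)
      simpa [abs_of_pos (by linarith : (0:ℝ) < lam + 1)] using this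
    linarith
end

section
/- Work in ℝ² with the Euclidean norm, coordinatewise order, and the norm topology, and let I_s = {A ⊆ ℕ : Σ_{a∈A} 1/a < ∞} be the summability ideal. Define t_n = n for all n ≥ 1, x_n = (1, −2/n) if n is not a perfect square and x_n = (n, −n) if n is a perfect square, and V = {(ξ,η) ∈ ℝ² : −1 < ξ < 1 and η ≥ −1}. Then the rough weighted I_τ-limit set of x with degree of roughness V equals {(ξ,η) ∈ ℝ² : ξ = 1 and η < 0}; in particular this set is neither closed nor open in ℝ². -/
open Topology Filter Set Pointwise

/-- The sequence of Example 5: `x n = (n, -n)` if `n` is a perfect square and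
`x n = (1, -2/n)` otherwise. -/
noncomputable def xSeq15 : ℕ → ℝ × ℝ := fun n =>
  if IsSquare n then ((n : ℝ), -(n : ℝ)) else (1, -(2 / (n : ℝ)))

/-- The degree of roughness of Example 5. -/
def V15 : Set (ℝ × ℝ) := {p | -1 < p.1 ∧ p.1 < 1 ∧ -1 ≤ p.2}




lemma mem_summabilityIdeal_iff {A : Set ℕ} :
    A ∈ summabilityIdeal ↔ Summable (A.indicator fun n : ℕ => (1:ℝ)/n) :=
  summable_subtype_iff_indicator (f := fun n : ℕ => (1:ℝ)/n) (s := A)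

lemma summabilityIdeal_mono {A B : Set ℕ} (hAB : A ⊆ B) (hB : B ∈ summabilityIdeal) :
    A ∈ summabilityIdeal := by
  rw [mem_summabilityIdeal_iff] at *
  refine Summable.of_nonneg_of_le (fun n => Set.indicator_nonneg (fun m _ => by positivity) n)
    (fun n => Set.indicator_le_indicator_of_subset hAB (fun m => by positivity) n) hB

lemma summabilityIdeal_union {A B : Set ℕ} (hA : A ∈ summabilityIdeal)
    (hB : B ∈ summabilityIdeal) : A ∪ B ∈ summabilityIdeal := by
  rw [mem_summabilityIdeal_iff] at *
  refine Summable.of_nonneg_of_le (fun n => Set.indicator_nonneg (fun m _ => by positivity) n)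
    (fun n => ?_) (hA.add hB)
  by_cases h1 : n ∈ A <;> by_cases h2 : n ∈ B <;>
    simp [Set.indicator, h1, h2] <;> positivity

lemma squares_mem_summabilityIdeal : {n : ℕ | IsSquare n} ∈ summabilityIdeal := by
  rw [mem_summabilityIdeal_iff]
  have hinj : Function.Injective (fun k : ℕ => k * k) := fun a b h => Nat.mul_self_inj.mp h
  rw [← Function.Injective.summable_iff hinj ?_]
  · have : Summable (fun k : ℕ => (1:ℝ) / (k:ℝ)^2) := Real.summable_one_div_nat_pow.mpr one_lt_two
    refine this.congr fun k => ?_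
    have hk : (k*k : ℕ) ∈ {n : ℕ | IsSquare n} := ⟨k, rfl⟩
    simp [Set.indicator_of_mem hk, pow_two]
  · intro n hn
    apply Set.indicator_of_notMem
    intro ⟨k, hk⟩
    exact hn ⟨k, hk.symm⟩

lemma lt_mem_summabilityIdeal (N : ℕ) : {n : ℕ | n < N} ∈ summabilityIdeal := by
  rw [mem_summabilityIdeal_iff]
  apply summable_of_ne_finset_zero (s := Finset.range N)
  intro n hn
  exact Set.indicator_of_notMem (by simpa using hn) _

lemma nonsquares_not_mem_s15 {N : ℕ} {A : Set ℕ}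
    (h : ∀ n, ¬IsSquare n → N ≤ n → n ∈ A) : A ∉ summabilityIdeal := by
  intro hA
  have huniv : (Set.univ : Set ℕ) ∈ summabilityIdeal := by
    refine summabilityIdeal_mono (B := A ∪ ({n | IsSquare n} ∪ {n | n < N})) ?_
      (summabilityIdeal_union hA
        (summabilityIdeal_union squares_mem_summabilityIdeal (lt_mem_summabilityIdeal N)))
    intro n _
    by_cases hs : IsSquare n
    · exact Or.inr (Or.inl hs)
    · by_cases hN : N ≤ n
      · exact Or.inl (h n hs hN)
      · exact Or.inr (Or.inr (by simpa using Nat.lt_of_not_le hN))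
  rw [mem_summabilityIdeal_iff, Set.indicator_univ] at huniv
  exact Real.not_summable_one_div_natCast huniv


lemma smul_eq_of_not_square (n : ℕ) (hs : ¬ IsSquare n) (ξ η : ℝ) :
    (n : ℝ) • (xSeq15 n - (ξ, η)) = ((n:ℝ)*(1-ξ), (n:ℝ)*(-(2/(n:ℝ)) - η)) := by
  simp [xSeq15, hs, Prod.smul_mk, Prod.mk_sub_mk]

lemma cast_ne_zero_of_not_square {n : ℕ} (hs : ¬ IsSquare n) : (n:ℝ) ≠ 0 :=
  Nat.cast_ne_zero.mpr (fun h => hs (h ▸ ⟨0, rfl⟩))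

lemma part1 :
    {xs : ℝ × ℝ | ∀ U ∈ 𝓝 (0 : ℝ × ℝ),
        {n : ℕ | (n : ℝ) • (xSeq15 n - xs) ∉ V15 + U} ∈ summabilityIdeal}
      = {p : ℝ × ℝ | p.1 = 1 ∧ p.2 < 0} := by
  ext ⟨ξ, η⟩
  simp only [Set.mem_setOf_eq]
  constructor
  · intro h
    constructor
    · -- ξ = 1
      by_contra hξ
      have hd : (0:ℝ) < |1 - ξ| := abs_pos.mpr (by intro h0; exact hξ (by linarith [sub_eq_zero.mp h0]))
      set U1 : Set (ℝ × ℝ) := Prod.fst ⁻¹' Set.Ioo (-1:ℝ) 1 with hU1def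
      have hU1 : U1 ∈ 𝓝 (0 : ℝ × ℝ) :=
        (isOpen_Ioo.preimage continuous_fst).mem_nhds (by norm_num [hU1def])
      obtain ⟨N, hN⟩ := exists_nat_ge (2 / |1 - ξ|)
      refine nonsquares_not_mem_s15 (N := N) (fun n hs hn => ?_) (h U1 hU1)
      simp only [Set.mem_setOf_eq]
      rw [smul_eq_of_not_square n hs ξ η]
      rintro ⟨v, hv, u, hu, huv⟩
      have h1 : v.1 + u.1 = (n:ℝ)*(1-ξ) := congrArg Prod.fst huv
      obtain ⟨hv1, hv2, _⟩ := hv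
      obtain ⟨hu1, hu2⟩ := hu
      have habs : |(n:ℝ)*(1-ξ)| < 2 := by
        rw [← h1]; rw [abs_lt]; constructor <;> [linarith; linarith]
      have h2 : (2:ℝ) ≤ (n:ℝ) * |1-ξ| := by
        have hn' : (2 / |1 - ξ|) ≤ (n:ℝ) := le_trans hN (by exact_mod_cast hn)
        calc (2:ℝ) = (2 / |1-ξ|) * |1-ξ| := by field_simp
        _ ≤ (n:ℝ) * |1-ξ| := by gcongr
      rw [abs_mul, Nat.abs_cast] at habs
      linarith
    · -- η < 0
      by_contra hη
      push_neg at hη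
      set U2 : Set (ℝ × ℝ) := Prod.snd ⁻¹' Set.Ioi (-(1/2):ℝ) with hU2def
      have hU2 : U2 ∈ 𝓝 (0 : ℝ × ℝ) :=
        (isOpen_Ioi.preimage continuous_snd).mem_nhds (by norm_num [hU2def])
      refine nonsquares_not_mem_s15 (N := 0) (fun n hs _ => ?_) (h U2 hU2)
      simp only [Set.mem_setOf_eq]
      rw [smul_eq_of_not_square n hs ξ η]
      rintro ⟨v, hv, u, hu, huv⟩
      have h1 : v.2 + u.2 = (n:ℝ)*(-(2/(n:ℝ)) - η) := congrArg Prod.snd huv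
      obtain ⟨_, _, hv3⟩ := hv
      have hu2 : -(1/2:ℝ) < u.2 := hu
      have hn0 : (n:ℝ) ≠ 0 := cast_ne_zero_of_not_square hs
      have hn0' : (0:ℝ) ≤ (n:ℝ) := Nat.cast_nonneg n
      have h2 : (n:ℝ)*(-(2/(n:ℝ)) - η) = -2 - (n:ℝ)*η := by field_simp
      have h3 : (n:ℝ)*η ≥ 0 := mul_nonneg hn0' hη
      rw [h2] at h1
      linarith
  · rintro ⟨hξ, hη⟩
    intro U hU
    obtain ⟨N, hN⟩ := exists_nat_ge (1 / (-η))
    have hsub : {n : ℕ | (n : ℝ) • (xSeq15 n - (ξ, η)) ∉ V15 + U}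
        ⊆ {n : ℕ | IsSquare n} ∪ {n : ℕ | n < N} := by
      intro n hn
      by_contra hmem
      simp only [Set.mem_union, Set.mem_setOf_eq] at hmem
      push_neg at hmem
      obtain ⟨hs, hNn⟩ := hmem
      have hNn' : N ≤ n := hNn
      apply hn
      have hn0 : (n:ℝ) ≠ 0 := cast_ne_zero_of_not_square hs
      have hPV : (n : ℝ) • (xSeq15 n - (ξ, η)) ∈ V15 := by
        rw [smul_eq_of_not_square n hs ξ η]
        subst hξ
        have h2 : (n:ℝ)*(-(2/(n:ℝ)) - η) = -2 - (n:ℝ)*η := by field_simp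
        refine ⟨by simp, by simp, ?_⟩
        simp only [h2]
        have hnegη : (0:ℝ) < -η := by linarith
        have h3 : (1:ℝ) ≤ (n:ℝ) * (-η) := by
          have hn' : (1 / (-η)) ≤ (n:ℝ) := le_trans hN (by exact_mod_cast hNn')
          calc (1:ℝ) = (1 / (-η)) * (-η) := by rw [one_div, inv_mul_cancel₀ hnegη.ne']
          _ ≤ (n:ℝ) * (-η) := by gcongr
        simp only [ge_iff_le]
        nlinarith
      exact ⟨_, hPV, 0, mem_of_mem_nhds hU, add_zero _⟩
    exact summabilityIdeal_mono hsub
      (summabilityIdeal_union squares_mem_summabilityIdeal (lt_mem_summabilityIdeal N))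


lemma notClosed15 : ¬ IsClosed ({p : ℝ × ℝ | p.1 = 1 ∧ p.2 < 0} : Set (ℝ × ℝ)) := by
  intro hcl
  have h1 : Tendsto (fun k : ℕ => ((1:ℝ), -(1/(k+1) : ℝ))) atTop (𝓝 ((1:ℝ), (0:ℝ))) := by
    refine Tendsto.prodMk_nhds tendsto_const_nhds ?_
    simpa using (tendsto_one_div_add_atTop_nhds_zero_nat (𝕜 := ℝ)).neg
  have hmem : ∀ k : ℕ, ((1:ℝ), -(1/(k+1) : ℝ)) ∈ {p : ℝ × ℝ | p.1 = 1 ∧ p.2 < 0} := by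
    intro k
    refine ⟨rfl, ?_⟩
    have : (0:ℝ) < 1/(k+1) := by positivity
    simpa using this
  have := hcl.mem_of_tendsto h1 (Filter.Eventually.of_forall hmem)
  exact absurd this.2 (by norm_num)

lemma notOpen15 : ¬ IsOpen ({p : ℝ × ℝ | p.1 = 1 ∧ p.2 < 0} : Set (ℝ × ℝ)) := by
  intro hop
  have h2 : {p : ℝ × ℝ | p.1 = 1 ∧ p.2 < 0} ∈ 𝓝 ((1:ℝ), (-1:ℝ)) :=
    hop.mem_nhds ⟨rfl, by norm_num⟩
  have hc : ContinuousAt (fun t : ℝ => ((t, (-1:ℝ)) : ℝ × ℝ)) 1 :=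
    (continuous_id.prodMk continuous_const).continuousAt
  have h4 := hc.preimage_mem_nhds h2
  rw [Metric.mem_nhds_iff] at h4
  obtain ⟨ε, hε, hball⟩ := h4
  have hmem : (1 + ε/2 : ℝ) ∈ Metric.ball (1:ℝ) ε := by
    rw [Metric.mem_ball, Real.dist_eq, show (1+ε/2-1:ℝ) = ε/2 by ring,
      abs_of_pos (by positivity)]
    linarith
  have := (hball hmem).1
  simp at this
  linarith

/-- In ℝ² with the summability ideal, weights `t n = n` and the sequence and
roughness set above, the rough weighted `I`-τ-limit set equals
`{(ξ, η) : ξ = 1 ∧ η < 0}`; in particular this set is neither closed nor open. -/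
theorem wLimSet_not_closed_example5 :
    {xs : ℝ × ℝ | ∀ U ∈ 𝓝 (0 : ℝ × ℝ),
        {n : ℕ | (n : ℝ) • (xSeq15 n - xs) ∉ V15 + U} ∈ summabilityIdeal}
      = {p : ℝ × ℝ | p.1 = 1 ∧ p.2 < 0} ∧
    ¬ IsClosed ({p : ℝ × ℝ | p.1 = 1 ∧ p.2 < 0} : Set (ℝ × ℝ)) ∧
    ¬ IsOpen ({p : ℝ × ℝ | p.1 = 1 ∧ p.2 < 0} : Set (ℝ × ℝ)) := by
  exact ⟨part1, notClosed15, notOpen15⟩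
end
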